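/- arXiv:2103.13050 — 3 statements merged into one kernel-verified Lean document; each statement's English description precedes it below -/
import Mathlib

section
/- Gelfand number interpolation in the domain: let 0 < p, q ≤ ∞, θ ∈ [0,1], and 1/p_θ = (1−θ)/q + θ/p. Then for 1 ≤ n ≤ N², c_n(S_{p_θ}^N ↪ S_q^N) ≥ c_n(S_p^N ↪ S_q^N)^{(1/p_θ − 1/q)/(1/p − 1/q)}. -/
open scoped ENNReal

/-- The (unordered) singular values of a real `N × N` matrix `A`:
the square roots of the eigenvalues of `Aᵀ * A`. -/
noncomputable def singularValues (N : ℕ) (A : Matrix (Fin N) (Fin N) ℝ) : Fin N → ℝ :=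
  fun i => Real.sqrt ((Matrix.isHermitian_conjTranspose_mul_self A).eigenvalues i)

/-- The Schatten `p`-(quasi-)norm of a real `N × N` matrix, `0 < p ≤ ∞`. -/
noncomputable def schattenNorm (N : ℕ) (p : ℝ≥0∞) (A : Matrix (Fin N) (Fin N) ℝ) : ℝ :=
  if p = ⊤ then ⨆ i, singularValues N A i
  else (∑ i, singularValues N A i ^ p.toReal) ^ (1 / p.toReal)

/-- The `n`-th approximation number of the natural identity `S_p^N → S_q^N`. -/
noncomputable def approxNumber (N : ℕ) (p q : ℝ≥0∞) (n : ℕ) : ℝ :=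
  sInf {r : ℝ | ∃ T : Matrix (Fin N) (Fin N) ℝ →ₗ[ℝ] Matrix (Fin N) (Fin N) ℝ,
    Module.finrank ℝ (LinearMap.range T) < n ∧
    r = sSup {s : ℝ | ∃ A, schattenNorm N p A ≤ 1 ∧ s = schattenNorm N q (A - T A)}}

/-- The `n`-th Gelfand number of the natural identity `S_p^N → S_q^N`. -/
noncomputable def gelfandNumber (N : ℕ) (p q : ℝ≥0∞) (n : ℕ) : ℝ :=
  sInf {r : ℝ | ∃ F : Submodule ℝ (Matrix (Fin N) (Fin N) ℝ),
    N ^ 2 - Module.finrank ℝ F < n ∧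
    r = sSup {s : ℝ | ∃ A ∈ F, schattenNorm N p A ≤ 1 ∧ s = schattenNorm N q A}}

/-- The `n`-th Kolmogorov number of the natural identity `S_p^N → S_q^N`. -/
noncomputable def kolmogorovNumber (N : ℕ) (p q : ℝ≥0∞) (n : ℕ) : ℝ :=
  sInf {r : ℝ | ∃ E : Submodule ℝ (Matrix (Fin N) (Fin N) ℝ),
    Module.finrank ℝ E < n ∧
    r = sSup {s : ℝ | ∃ A, schattenNorm N p A ≤ 1 ∧
      s = sInf {t : ℝ | ∃ B ∈ E, t = schattenNorm N q (A - B)}}}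

/-! ### Auxiliary lemmas -/

open Polynomial Matrix Finset in
private lemma charpoly_unitary_conj' {N : ℕ} (U : Matrix.unitaryGroup (Fin N) ℝ)
    (d : Fin N → ℝ) :
    ((U : Matrix (Fin N) (Fin N) ℝ) * Matrix.diagonal d *
      star (U : Matrix (Fin N) (Fin N) ℝ)).charpoly = ∏ i, (X - C (d i)) := by
  classical
  set Um : Matrix (Fin N) (Fin N) ℝ := (U : Matrix (Fin N) (Fin N) ℝ) with hUm
  have hU : Um * star Um = 1 := Matrix.mem_unitaryGroup_iff.mp U.2
  let f : Matrix (Fin N) (Fin N) ℝ →+* Matrix (Fin N) (Fin N) ℝ[X] :=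
    (Polynomial.C : ℝ →+* ℝ[X]).mapMatrix
  have hU' : f Um * f (star Um) = 1 := by rw [← _root_.map_mul, hU, RingHom.map_one]
  have hscalar : (Matrix.scalar (Fin N)) (X : ℝ[X])
      = (X : ℝ[X]) • (1 : Matrix (Fin N) (Fin N) ℝ[X]) := by
    simp [Matrix.scalar_apply, Matrix.smul_eq_diagonal_mul]
  have key : charmatrix (Um * Matrix.diagonal d * star Um)
      = f Um * charmatrix (Matrix.diagonal d) * f (star Um) := by
    unfold Matrix.charmatrix
    rw [mul_sub, sub_mul, _root_.map_mul, _root_.map_mul, hscalar]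
    congr 1
    rw [mul_smul_comm, mul_one, smul_mul_assoc, hU']
  have hdet : (Um * Matrix.diagonal d * star Um).charpoly = (Matrix.diagonal d).charpoly := by
    unfold Matrix.charpoly
    rw [key, Matrix.det_mul, Matrix.det_mul]
    have h1 : (f Um).det * (f (star Um)).det = 1 := by
      rw [← Matrix.det_mul, hU', Matrix.det_one]
    calc (f Um).det * (charmatrix (Matrix.diagonal d)).det * (f (star Um)).det
        = (f Um).det * (f (star Um)).det * (charmatrix (Matrix.diagonal d)).det := by ring
      _ = (charmatrix (Matrix.diagonal d)).det := by rw [h1, one_mul]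
  rw [hdet]
  unfold Matrix.charpoly Matrix.charmatrix
  rw [hscalar]
  have h2 : (X : ℝ[X]) • (1 : Matrix (Fin N) (Fin N) ℝ[X])
        - (Polynomial.C : ℝ →+* ℝ[X]).mapMatrix (Matrix.diagonal d)
      = Matrix.diagonal (fun i => X - C (d i)) := by
    rw [RingHom.mapMatrix_apply, Matrix.diagonal_map (by simp)]
    ext i j
    by_cases h : i = j <;> simp [h, Matrix.one_apply, Matrix.diagonal_apply]
  rw [h2, det_diagonal]

open Polynomial Matrix Finset in
private lemma spectral_real' {N : ℕ} {M : Matrix (Fin N) (Fin N) ℝ} (hM : M.IsHermitian) :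
    M = (hM.eigenvectorUnitary : Matrix (Fin N) (Fin N) ℝ) * Matrix.diagonal hM.eigenvalues *
      star (hM.eigenvectorUnitary : Matrix (Fin N) (Fin N) ℝ) := by
  convert hM.spectral_theorem using 2
  rw [Unitary.conjStarAlgAut_apply]
  simp

open Polynomial Matrix Finset in
private lemma roots_prod_fn' {N : ℕ} (f : Fin N → ℝ) :
    (∏ i, (X - C (f i))).roots = Multiset.map f Finset.univ.val := by
  classical
  have h : (∏ i, (X - C (f i))) = ((Finset.univ.val.map f).map fun a => X - C a).prod := by
    rw [Multiset.map_map]; rfl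
  rw [h, Polynomial.roots_multiset_prod_X_sub_C]

open Polynomial Matrix Finset in
private lemma eigenvalues_multiset_of_diag' {N : ℕ} {M : Matrix (Fin N) (Fin N) ℝ}
    (hM : M.IsHermitian) (U : Matrix.unitaryGroup (Fin N) ℝ) (d : Fin N → ℝ)
    (hMeq : M = (U : Matrix (Fin N) (Fin N) ℝ) * Matrix.diagonal d *
      star (U : Matrix (Fin N) (Fin N) ℝ)) :
    Multiset.map hM.eigenvalues Finset.univ.val = Multiset.map d Finset.univ.val := by
  classical
  have h1 : M.charpoly = ∏ i, (X - C (hM.eigenvalues i)) := by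
    conv_lhs => rw [spectral_real' hM]
    exact charpoly_unitary_conj' _ _
  have h2 : M.charpoly = ∏ i, (X - C (d i)) := by
    conv_lhs => rw [hMeq]
    exact charpoly_unitary_conj' _ _
  have h3 := congrArg Polynomial.roots (h1.symm.trans h2)
  rwa [roots_prod_fn', roots_prod_fn'] at h3

open Matrix Finset in
private lemma singularValues_smul_multiset' {N : ℕ} (A : Matrix (Fin N) (Fin N) ℝ) {c : ℝ}
    (hc : 0 ≤ c) :
    Multiset.map (singularValues N (c • A)) Finset.univ.val
      = Multiset.map (fun i => c * singularValues N A i) Finset.univ.val := by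
  classical
  set M : Matrix (Fin N) (Fin N) ℝ := Aᴴ * A with hMdef
  have hM : M.IsHermitian := Matrix.isHermitian_conjTranspose_mul_self A
  have heq : (c • A)ᴴ * (c • A) = (c ^ 2) • M := by
    rw [Matrix.conjTranspose_smul, Matrix.smul_mul, Matrix.mul_smul, smul_smul]
    rw [hMdef, sq]
    rfl
  have h2 : ((c • A)ᴴ * (c • A)).IsHermitian := Matrix.isHermitian_conjTranspose_mul_self (c • A)
  have hspec : M = (hM.eigenvectorUnitary : Matrix (Fin N) (Fin N) ℝ)
      * Matrix.diagonal hM.eigenvalues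
      * star (hM.eigenvectorUnitary : Matrix (Fin N) (Fin N) ℝ) := spectral_real' hM
  have hspec2 : (c • A)ᴴ * (c • A) = (hM.eigenvectorUnitary : Matrix (Fin N) (Fin N) ℝ)
      * Matrix.diagonal (fun i => c ^ 2 * hM.eigenvalues i)
      * star (hM.eigenvectorUnitary : Matrix (Fin N) (Fin N) ℝ) := by
    rw [heq]
    conv_lhs => rw [hspec]
    have hd : Matrix.diagonal (fun i => c ^ 2 * hM.eigenvalues i)
        = c ^ 2 • Matrix.diagonal hM.eigenvalues := by
      rw [← Matrix.diagonal_smul]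
      rfl
    rw [hd, Matrix.mul_smul, Matrix.smul_mul]
  have hmult := eigenvalues_multiset_of_diag' h2 hM.eigenvectorUnitary _ hspec2
  have hsv : singularValues N (c • A) = fun i => Real.sqrt (h2.eigenvalues i) := rfl
  have hsv2 : singularValues N A = fun i => Real.sqrt (hM.eigenvalues i) := rfl
  rw [hsv, hsv2]
  have h3 : Multiset.map (fun i => Real.sqrt (h2.eigenvalues i)) Finset.univ.val
      = Multiset.map Real.sqrt (Multiset.map h2.eigenvalues Finset.univ.val) := by
    rw [Multiset.map_map]; rfl
  rw [h3, hmult, Multiset.map_map]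
  congr 1
  ext i
  simp only [Function.comp_apply]
  rw [Real.sqrt_mul (by positivity), Real.sqrt_sq hc]

open Finset in
private lemma sum_comp_of_multiset_eq' {N : ℕ} {g₁ g₂ : Fin N → ℝ}
    (h : Multiset.map g₁ Finset.univ.val = Multiset.map g₂ Finset.univ.val) (F : ℝ → ℝ) :
    ∑ i, F (g₁ i) = ∑ i, F (g₂ i) := by
  have e1 : ∑ i, F (g₁ i) = (Multiset.map F (Multiset.map g₁ Finset.univ.val)).sum := by
    rw [Multiset.map_map]; rfl
  have e2 : ∑ i, F (g₂ i) = (Multiset.map F (Multiset.map g₂ Finset.univ.val)).sum := by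
    rw [Multiset.map_map]; rfl
  rw [e1, e2, h]

open Finset in
private lemma ciSup_of_multiset_eq' {N : ℕ} (hN : 0 < N) {g₁ g₂ : Fin N → ℝ}
    (h : Multiset.map g₁ Finset.univ.val = Multiset.map g₂ Finset.univ.val) :
    ⨆ i, g₁ i = ⨆ i, g₂ i := by
  haveI : Nonempty (Fin N) := ⟨⟨0, hN⟩⟩
  rw [← Finset.sup'_univ_eq_ciSup, ← Finset.sup'_univ_eq_ciSup]
  have key : ∀ (f₁ f₂ : Fin N → ℝ),
      Multiset.map f₁ Finset.univ.val = Multiset.map f₂ Finset.univ.val →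
      Finset.univ.sup' Finset.univ_nonempty f₁ ≤ Finset.univ.sup' Finset.univ_nonempty f₂ := by
    intro f₁ f₂ hf
    apply Finset.sup'_le
    intro i _
    have hmem : f₁ i ∈ Multiset.map f₂ Finset.univ.val := by
      rw [← hf]
      exact Multiset.mem_map.mpr ⟨i, Finset.mem_univ i, rfl⟩
    obtain ⟨j, _, hj⟩ := Multiset.mem_map.mp hmem
    rw [← hj]
    exact Finset.le_sup' f₂ (Finset.mem_univ j)
  exact le_antisymm (key _ _ h) (key _ _ h.symm)

private lemma singularValues_nonneg' {N : ℕ} (A : Matrix (Fin N) (Fin N) ℝ) (i : Fin N) :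
    0 ≤ singularValues N A i := Real.sqrt_nonneg _

private lemma schattenNorm_nonneg' {N : ℕ} (p : ℝ≥0∞) (A : Matrix (Fin N) (Fin N) ℝ) :
    0 ≤ schattenNorm N p A := by
  unfold schattenNorm
  split
  · exact Real.iSup_nonneg fun i => singularValues_nonneg' A i
  · exact Real.rpow_nonneg
      (Finset.sum_nonneg fun i _ => Real.rpow_nonneg (singularValues_nonneg' A i) _) _

private lemma schattenNorm_smul' {N : ℕ} (hN : 0 < N) {p : ℝ≥0∞} (hp0 : p ≠ 0)
    (A : Matrix (Fin N) (Fin N) ℝ) {c : ℝ} (hc : 0 ≤ c) :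
    schattenNorm N p (c • A) = c * schattenNorm N p A := by
  haveI : Nonempty (Fin N) := ⟨⟨0, hN⟩⟩
  unfold schattenNorm
  split
  · rw [ciSup_of_multiset_eq' hN (singularValues_smul_multiset' A hc)]
    rw [← Finset.sup'_univ_eq_ciSup, ← Finset.sup'_univ_eq_ciSup]
    exact (Finset.comp_sup'_eq_sup'_comp Finset.univ_nonempty (c * ·)
      (fun x y => mul_max_of_nonneg x y hc)).symm
  · rename_i htop
    have hr : 0 < p.toReal := ENNReal.toReal_pos hp0 htop
    rw [sum_comp_of_multiset_eq' (singularValues_smul_multiset' A hc) (· ^ p.toReal)]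
    have h1 : ∀ i : Fin N, (c * singularValues N A i) ^ p.toReal
        = c ^ p.toReal * singularValues N A i ^ p.toReal := fun i =>
      Real.mul_rpow hc (singularValues_nonneg' A i)
    rw [Finset.sum_congr rfl fun i _ => h1 i, ← Finset.mul_sum,
      Real.mul_rpow (Real.rpow_nonneg hc _)
        (Finset.sum_nonneg fun i _ => Real.rpow_nonneg (singularValues_nonneg' A i) _),
      ← Real.rpow_mul hc, mul_one_div_cancel hr.ne', Real.rpow_one]

private lemma schattenNorm_zero' {N : ℕ} (hN : 0 < N) {p : ℝ≥0∞} (hp0 : p ≠ 0) :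
    schattenNorm N p (0 : Matrix (Fin N) (Fin N) ℝ) = 0 := by
  have h0 : (0 : Matrix (Fin N) (Fin N) ℝ) = (0 : ℝ) • (0 : Matrix (Fin N) (Fin N) ℝ) := by
    simp
  rw [h0, schattenNorm_smul' hN hp0 _ le_rfl, zero_mul]

open Matrix in
private lemma exists_singularValue_pos' {N : ℕ} {A : Matrix (Fin N) (Fin N) ℝ} (hA : A ≠ 0) :
    ∃ i, 0 < singularValues N A i := by
  classical
  have hM : (Aᴴ * A).IsHermitian := Matrix.isHermitian_conjTranspose_mul_self A
  by_contra hcon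
  push_neg at hcon
  have hzero : ∀ i, hM.eigenvalues i = 0 := by
    intro i
    have h1 : 0 ≤ hM.eigenvalues i := Matrix.eigenvalues_conjTranspose_mul_self_nonneg A i
    have h2 := hcon i
    unfold singularValues at h2
    by_contra hne
    have hpos : 0 < hM.eigenvalues i := lt_of_le_of_ne h1 (Ne.symm hne)
    exact absurd (Real.sqrt_pos.mpr hpos) (not_lt.mpr h2)
  have hAA : Aᴴ * A = 0 := by
    conv_lhs => rw [spectral_real' hM]
    have hd : Matrix.diagonal hM.eigenvalues = 0 := by
      ext i j
      by_cases h : i = j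
      · subst h; rw [Matrix.diagonal_apply_eq]; exact hzero i
      · simp [Matrix.diagonal_apply, h, hzero]
    rw [hd, Matrix.mul_zero, Matrix.zero_mul]
  exact hA (Matrix.conjTranspose_mul_self_eq_zero.mp hAA)

private lemma singularValue_le_schattenNorm' {N : ℕ} {p : ℝ≥0∞} (hp0 : p ≠ 0)
    (A : Matrix (Fin N) (Fin N) ℝ) (i : Fin N) :
    singularValues N A i ≤ schattenNorm N p A := by
  unfold schattenNorm
  split
  · exact le_ciSup (Set.Finite.bddAbove (Set.finite_range _)) i
  · rename_i htop
    have hr : 0 < p.toReal := ENNReal.toReal_pos hp0 htop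
    have h1 : singularValues N A i ^ p.toReal ≤ ∑ j, singularValues N A j ^ p.toReal :=
      Finset.single_le_sum (fun j _ => Real.rpow_nonneg (singularValues_nonneg' A j) _)
        (Finset.mem_univ i)
    calc singularValues N A i
        = (singularValues N A i ^ p.toReal) ^ (1 / p.toReal) := by
          rw [← Real.rpow_mul (singularValues_nonneg' A i), mul_one_div_cancel hr.ne',
            Real.rpow_one]
      _ ≤ _ := Real.rpow_le_rpow (Real.rpow_nonneg (singularValues_nonneg' A i) _) h1
          (by positivity)

private lemma schattenNorm_pos' {N : ℕ} {p : ℝ≥0∞} (hp0 : p ≠ 0)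
    {A : Matrix (Fin N) (Fin N) ℝ} (hA : A ≠ 0) :
    0 < schattenNorm N p A := by
  obtain ⟨i, hi⟩ := exists_singularValue_pos' hA
  exact lt_of_lt_of_le hi (singularValue_le_schattenNorm' hp0 A i)

private lemma schattenNorm_le_schattenNorm' {N : ℕ} (hN : 0 < N) {p q : ℝ≥0∞}
    (hp0 : p ≠ 0) (hq0 : q ≠ 0) (A : Matrix (Fin N) (Fin N) ℝ) :
    schattenNorm N q A ≤ (N : ℝ) ^ (1 / q.toReal) * schattenNorm N p A := by
  haveI : Nonempty (Fin N) := ⟨⟨0, hN⟩⟩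
  have hsup : (⨆ i, singularValues N A i) ≤ schattenNorm N p A :=
    ciSup_le fun i => singularValue_le_schattenNorm' hp0 A i
  have hsup0 : 0 ≤ ⨆ i, singularValues N A i :=
    Real.iSup_nonneg fun i => singularValues_nonneg' A i
  by_cases hqt : q = ⊤
  · rw [schattenNorm, if_pos hqt, hqt]
    simp only [ENNReal.toReal_top, div_zero, Real.rpow_zero, one_mul]
    exact hsup
  · rw [schattenNorm, if_neg hqt]
    have hr : 0 < q.toReal := ENNReal.toReal_pos hq0 hqt
    have hbound : ∑ i, singularValues N A i ^ q.toReal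
        ≤ (N : ℝ) * (⨆ i, singularValues N A i) ^ q.toReal := by
      calc ∑ i, singularValues N A i ^ q.toReal
          ≤ ∑ _i : Fin N, (⨆ j, singularValues N A j) ^ q.toReal :=
            Finset.sum_le_sum fun i _ => Real.rpow_le_rpow (singularValues_nonneg' A i)
              (le_ciSup (Set.Finite.bddAbove (Set.finite_range _)) i) hr.le
        _ = (N : ℝ) * (⨆ i, singularValues N A i) ^ q.toReal := by
            rw [Finset.sum_const, Finset.card_univ, Fintype.card_fin, nsmul_eq_mul]
    calc (∑ i, singularValues N A i ^ q.toReal) ^ (1 / q.toReal)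
        ≤ ((N : ℝ) * (⨆ i, singularValues N A i) ^ q.toReal) ^ (1 / q.toReal) :=
          Real.rpow_le_rpow (Finset.sum_nonneg fun i _ =>
            Real.rpow_nonneg (singularValues_nonneg' A i) _) hbound (by positivity)
      _ = (N : ℝ) ^ (1 / q.toReal) * ((⨆ i, singularValues N A i) ^ q.toReal) ^ (1 / q.toReal) :=
          Real.mul_rpow (by positivity) (Real.rpow_nonneg hsup0 _)
      _ = (N : ℝ) ^ (1 / q.toReal) * (⨆ i, singularValues N A i) := by
          rw [← Real.rpow_mul hsup0, mul_one_div_cancel hr.ne', Real.rpow_one]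
      _ ≤ (N : ℝ) ^ (1 / q.toReal) * schattenNorm N p A := by
          apply mul_le_mul_of_nonneg_left hsup (by positivity)

private lemma littlewood_sup_case' {N : ℕ} (σ : Fin N → ℝ) (hσ : ∀ i, 0 ≤ σ i)
    {r t : ℝ} (hr : 0 < r) (hrt : r < t) :
    (∑ i, σ i ^ t) ^ (1 / t)
      ≤ (⨆ i, σ i) ^ (1 - r / t) * ((∑ i, σ i ^ r) ^ (1 / r)) ^ (r / t) := by
  have ht : 0 < t := hr.trans hrt
  set s : ℝ := ⨆ i, σ i with hs
  have hs0 : 0 ≤ s := Real.iSup_nonneg hσ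
  have hσs : ∀ i, σ i ≤ s := fun i => le_ciSup (Set.Finite.bddAbove (Set.finite_range _)) i
  have hsumr : 0 ≤ ∑ i, σ i ^ r := Finset.sum_nonneg fun i _ => Real.rpow_nonneg (hσ i) _
  have key : ∑ i, σ i ^ t ≤ s ^ (t - r) * ∑ i, σ i ^ r := by
    rw [Finset.mul_sum]
    apply Finset.sum_le_sum
    intro i _
    have h1 : σ i ^ t = σ i ^ (t - r) * σ i ^ r := by
      rw [← Real.rpow_add' (hσ i) (by rw [sub_add_cancel]; exact ht.ne')]
      rw [sub_add_cancel]
    rw [h1]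
    exact mul_le_mul_of_nonneg_right
      (Real.rpow_le_rpow (hσ i) (hσs i) (by linarith)) (Real.rpow_nonneg (hσ i) _)
  calc (∑ i, σ i ^ t) ^ (1 / t)
      ≤ (s ^ (t - r) * ∑ i, σ i ^ r) ^ (1 / t) :=
        Real.rpow_le_rpow (Finset.sum_nonneg fun i _ => Real.rpow_nonneg (hσ i) _) key
          (by positivity)
    _ = s ^ ((t - r) / t) * (∑ i, σ i ^ r) ^ (1 / t) := by
        rw [Real.mul_rpow (Real.rpow_nonneg hs0 _) hsumr, ← Real.rpow_mul hs0]
        ring_nf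
    _ = s ^ (1 - r / t) * ((∑ i, σ i ^ r) ^ (1 / r)) ^ (r / t) := by
        rw [← Real.rpow_mul hsumr]
        congr 2
        · field_simp
        · field_simp

private lemma littlewood' {N : ℕ} {p q pθ : ℝ≥0∞} (hp0 : p ≠ 0) (hq0 : q ≠ 0)
    (hpθ0 : pθ ≠ 0) (hpθtop : pθ ≠ ⊤)
    {θ : ℝ} (hθ : 0 < θ) (hθ1 : θ < 1)
    (hmean : 1 / pθ.toReal = (1 - θ) / q.toReal + θ / p.toReal)
    (A : Matrix (Fin N) (Fin N) ℝ) :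
    schattenNorm N pθ A ≤ schattenNorm N q A ^ (1 - θ) * schattenNorm N p A ^ θ := by
  set σ : Fin N → ℝ := singularValues N A with hσdef
  have hσ : ∀ i, 0 ≤ σ i := singularValues_nonneg' A
  have ht : 0 < pθ.toReal := ENNReal.toReal_pos hpθ0 hpθtop
  set t : ℝ := pθ.toReal with htdef
  have hθ1' : 0 < 1 - θ := by linarith
  by_cases hqtop : q = ⊤
  · by_cases hptop : p = ⊤
    · exfalso
      rw [hqtop, hptop] at hmean
      simp only [ENNReal.toReal_top, div_zero, add_zero, zero_add] at hmean
      exact absurd hmean (one_div_pos.mpr ht).ne'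
    · have hb : 0 < p.toReal := ENNReal.toReal_pos hp0 hptop
      set r : ℝ := p.toReal with hrdef
      rw [hqtop] at hmean
      simp only [ENNReal.toReal_top, div_zero, zero_add] at hmean
      have hrt : r = θ * t := by
        field_simp at hmean
        linarith [hmean]
      have hlt : r < t := by nlinarith
      have h := littlewood_sup_case' σ hσ hb hlt
      have e1 : r / t = θ := by rw [hrt]; field_simp
      rw [e1] at h
      rw [schattenNorm, if_neg hpθtop, schattenNorm, if_pos hqtop, schattenNorm, if_neg hptop]
      exact h
  · by_cases hptop : p = ⊤
    · have ha : 0 < q.toReal := ENNReal.toReal_pos hq0 hqtop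
      set r : ℝ := q.toReal with hrdef
      rw [hptop] at hmean
      simp only [ENNReal.toReal_top, div_zero, add_zero] at hmean
      have hrt : r = (1 - θ) * t := by
        field_simp at hmean
        linarith [hmean]
      have hlt : r < t := by nlinarith
      have h := littlewood_sup_case' σ hσ ha hlt
      have e1 : r / t = 1 - θ := by rw [hrt]; field_simp
      rw [e1, show (1 : ℝ) - (1 - θ) = θ by ring] at h
      rw [schattenNorm, if_neg hpθtop, schattenNorm, if_neg hqtop, schattenNorm, if_pos hptop]
      rw [mul_comm] at h
      exact h
    · have ha : 0 < q.toReal := ENNReal.toReal_pos hq0 hqtop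
      have hb : 0 < p.toReal := ENNReal.toReal_pos hp0 hptop
      set a : ℝ := q.toReal with hadef
      set b : ℝ := p.toReal with hbdef
      set u : ℝ := a / ((1 - θ) * t) with hudef
      set v : ℝ := b / (θ * t) with hvdef
      have hu0 : 0 < u := by positivity
      have hv0 : 0 < v := by positivity
      have huv : 1 / u + 1 / v = 1 := by
        rw [hudef, hvdef, one_div_div, one_div_div]
        have h5 : (1 - θ) * t / a + θ * t / b = t * ((1 - θ) / a + θ / b) := by ring
        rw [h5, ← hmean]
        field_simp
      have hu1 : 1 < u := by
        have h1v : 0 < 1 / v := by positivity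
        have h6 : 1 / u < 1 := by linarith
        rwa [div_lt_one hu0] at h6
      have hconj : u.HolderConjugate v :=
        Real.holderConjugate_iff.mpr ⟨hu1, by rw [← one_div, ← one_div]; exact huv⟩
      have holder := Real.inner_le_Lp_mul_Lq_of_nonneg (s := Finset.univ) hconj
        (f := fun i => σ i ^ ((1 - θ) * t)) (g := fun i => σ i ^ (θ * t))
        (fun i _ => Real.rpow_nonneg (hσ i) _) (fun i _ => Real.rpow_nonneg (hσ i) _)
      have e0 : ∀ i : Fin N, σ i ^ ((1 - θ) * t) * σ i ^ (θ * t) = σ i ^ t := by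
        intro i
        rw [← Real.rpow_add' (hσ i) (by rw [show (1-θ)*t + θ*t = t by ring]; exact ht.ne')]
        rw [show (1-θ)*t + θ*t = t by ring]
      have e1 : ∀ i : Fin N, (σ i ^ ((1 - θ) * t)) ^ u = σ i ^ a := by
        intro i
        rw [← Real.rpow_mul (hσ i)]
        congr 1
        rw [hudef]
        field_simp
      have e2 : ∀ i : Fin N, (σ i ^ (θ * t)) ^ v = σ i ^ b := by
        intro i
        rw [← Real.rpow_mul (hσ i)]
        congr 1
        rw [hvdef]
        field_simp
      have hSa : 0 ≤ ∑ i, σ i ^ a := Finset.sum_nonneg fun i _ => Real.rpow_nonneg (hσ i) _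
      have hSb : 0 ≤ ∑ i, σ i ^ b := Finset.sum_nonneg fun i _ => Real.rpow_nonneg (hσ i) _
      have hkey : ∑ i, σ i ^ t ≤ (∑ i, σ i ^ a) ^ (1 / u) * (∑ i, σ i ^ b) ^ (1 / v) := by
        calc ∑ i, σ i ^ t = ∑ i, σ i ^ ((1 - θ) * t) * σ i ^ (θ * t) :=
              Finset.sum_congr rfl fun i _ => (e0 i).symm
          _ ≤ (∑ i, (σ i ^ ((1 - θ) * t)) ^ u) ^ (1 / u)
              * (∑ i, (σ i ^ (θ * t)) ^ v) ^ (1 / v) := holder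
          _ = _ := by
              rw [Finset.sum_congr rfl fun i _ => e1 i, Finset.sum_congr rfl fun i _ => e2 i]
      rw [schattenNorm, if_neg hpθtop, schattenNorm, if_neg hqtop, schattenNorm, if_neg hptop]
      calc (∑ i, σ i ^ t) ^ (1 / t)
          ≤ ((∑ i, σ i ^ a) ^ (1 / u) * (∑ i, σ i ^ b) ^ (1 / v)) ^ (1 / t) :=
            Real.rpow_le_rpow
              (Finset.sum_nonneg fun i _ => Real.rpow_nonneg (hσ i) _) hkey (by positivity)
        _ = ((∑ i, σ i ^ a) ^ (1 / a)) ^ (1 - θ) * ((∑ i, σ i ^ b) ^ (1 / b)) ^ θ := by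
            rw [Real.mul_rpow (Real.rpow_nonneg hSa _) (Real.rpow_nonneg hSb _),
              ← Real.rpow_mul hSa, ← Real.rpow_mul hSb,
              ← Real.rpow_mul hSa, ← Real.rpow_mul hSb]
            congr 1
            · congr 1
              rw [hudef]
              field_simp
            · congr 1
              rw [hvdef]
              field_simp

private lemma ennreal_eq_of_one_div_toReal_eq {x y : ℝ≥0∞} (hx : x ≠ 0) (hy : y ≠ 0)
    (h : 1 / x.toReal = 1 / y.toReal) : x = y := by
  by_cases hxt : x = ⊤
  · rw [hxt] at h
    simp only [ENNReal.toReal_top, div_zero] at h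
    by_cases hyt : y = ⊤
    · rw [hxt, hyt]
    · have hy' : 0 < y.toReal := ENNReal.toReal_pos hy hyt
      exact absurd h.symm (one_div_pos.mpr hy').ne'
  · have hx' : 0 < x.toReal := ENNReal.toReal_pos hx hxt
    by_cases hyt : y = ⊤
    · rw [hyt] at h
      simp only [ENNReal.toReal_top, div_zero] at h
      exact absurd h (one_div_pos.mpr hx').ne'
    · have heq : x.toReal = y.toReal := by
        calc x.toReal = 1 / (1 / x.toReal) := (one_div_one_div _).symm
          _ = 1 / (1 / y.toReal) := by rw [h]
          _ = y.toReal := one_div_one_div _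
      exact (ENNReal.toReal_eq_toReal_iff' hxt hyt).mp heq

/-- **Gelfand number interpolation in the domain.** Let `0 < p, q ≤ ∞`, `θ ∈ [0,1]`,
and `1/p_θ = (1-θ)/q + θ/p`. Then for `1 ≤ n ≤ N²`,
`c_n(S_{p_θ}^N ↪ S_q^N) ≥ c_n(S_p^N ↪ S_q^N)^((1/p_θ - 1/q)/(1/p - 1/q))`. -/
theorem gelfand_interpolation_domain (N : ℕ) (p q pθ : ℝ≥0∞)
    (hp : 0 < p) (hq : 0 < q) (hpθ : 0 < pθ)
    (θ : ℝ) (hθ0 : 0 ≤ θ) (hθ1 : θ ≤ 1)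
    (hmean : 1 / pθ.toReal = (1 - θ) / q.toReal + θ / p.toReal)
    (n : ℕ) (hn1 : 1 ≤ n) (hn2 : n ≤ N ^ 2) :
    gelfandNumber N p q n
        ^ ((1 / pθ.toReal - 1 / q.toReal) / (1 / p.toReal - 1 / q.toReal))
      ≤ gelfandNumber N pθ q n := by
  classical
  have hN : 0 < N := by
    rcases Nat.eq_zero_or_pos N with h | h
    · exfalso; rw [h] at hn2; simp at hn2; omega
    · exact h
  haveI : Nonempty (Fin N) := ⟨⟨0, hN⟩⟩
  have hp0 : p ≠ 0 := hp.ne'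
  have hq0 : q ≠ 0 := hq.ne'
  have hpθ0 : pθ ≠ 0 := hpθ.ne'
  set C : ℝ := (N : ℝ) ^ (1 / q.toReal) with hC
  -- facts about the inner sets
  have hbdd : ∀ (P : ℝ≥0∞), P ≠ 0 → ∀ F : Submodule ℝ (Matrix (Fin N) (Fin N) ℝ),
      BddAbove {s : ℝ | ∃ A ∈ F, schattenNorm N P A ≤ 1 ∧ s = schattenNorm N q A} := by
    intro P hP0 F
    refine ⟨C, ?_⟩
    rintro s ⟨A, _, hA1, rfl⟩
    calc schattenNorm N q A ≤ C * schattenNorm N P A :=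
          schattenNorm_le_schattenNorm' hN hP0 hq0 A
      _ ≤ C * 1 := mul_le_mul_of_nonneg_left hA1 (by positivity)
      _ = C := mul_one C
  have hmem0 : ∀ (P : ℝ≥0∞), P ≠ 0 → ∀ F : Submodule ℝ (Matrix (Fin N) (Fin N) ℝ),
      (0 : ℝ) ∈ {s : ℝ | ∃ A ∈ F, schattenNorm N P A ≤ 1 ∧ s = schattenNorm N q A} := by
    intro P hP0 F
    exact ⟨0, F.zero_mem, by rw [schattenNorm_zero' hN hP0]; exact zero_le_one,
      (schattenNorm_zero' hN hq0).symm⟩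
  have hsup0 : ∀ (P : ℝ≥0∞) (hP0 : P ≠ 0) (F : Submodule ℝ (Matrix (Fin N) (Fin N) ℝ)),
      0 ≤ sSup {s : ℝ | ∃ A ∈ F, schattenNorm N P A ≤ 1 ∧ s = schattenNorm N q A} :=
    fun P hP0 F => le_csSup (hbdd P hP0 F) (hmem0 P hP0 F)
  -- facts about the Gelfand numbers
  have hc0 : 0 ≤ gelfandNumber N p q n := by
    rw [show gelfandNumber N p q n = sInf {r : ℝ |
        ∃ F : Submodule ℝ (Matrix (Fin N) (Fin N) ℝ), N ^ 2 - Module.finrank ℝ F < n ∧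
        r = sSup {s : ℝ | ∃ A ∈ F, schattenNorm N p A ≤ 1 ∧ s = schattenNorm N q A}} from rfl]
    apply Real.sInf_nonneg
    rintro r ⟨F, hF, rfl⟩
    exact hsup0 p hp0 F
  have hcle : ∀ F : Submodule ℝ (Matrix (Fin N) (Fin N) ℝ), N ^ 2 - Module.finrank ℝ F < n →
      gelfandNumber N p q n
        ≤ sSup {s : ℝ | ∃ A ∈ F, schattenNorm N p A ≤ 1 ∧ s = schattenNorm N q A} := by
    intro F hF
    rw [show gelfandNumber N p q n = sInf {r : ℝ |
        ∃ F : Submodule ℝ (Matrix (Fin N) (Fin N) ℝ), N ^ 2 - Module.finrank ℝ F < n ∧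
        r = sSup {s : ℝ | ∃ A ∈ F, schattenNorm N p A ≤ 1 ∧ s = schattenNorm N q A}} from rfl]
    apply csInf_le
    · refine ⟨0, ?_⟩
      rintro r ⟨F', hF', rfl⟩
      exact hsup0 p hp0 F'
    · exact ⟨F, hF, rfl⟩
  -- pass to the RHS infimum
  rw [show gelfandNumber N pθ q n = sInf {r : ℝ |
      ∃ F : Submodule ℝ (Matrix (Fin N) (Fin N) ℝ), N ^ 2 - Module.finrank ℝ F < n ∧
      r = sSup {s : ℝ | ∃ A ∈ F, schattenNorm N pθ A ≤ 1 ∧ s = schattenNorm N q A}} from rfl]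
  apply le_csInf
  · refine ⟨_, ⟨⊤, ?_, rfl⟩⟩
    have hdim : Module.finrank ℝ (⊤ : Submodule ℝ (Matrix (Fin N) (Fin N) ℝ)) = N ^ 2 := by
      rw [finrank_top, Module.finrank_matrix]
      simp [sq]
    rw [hdim]
    omega
  · rintro r ⟨F, hF, rfl⟩
    have hFne : F ≠ ⊥ := by
      intro h
      rw [h, finrank_bot] at hF
      omega
    obtain ⟨A₀, hA₀F, hA₀⟩ := Submodule.exists_mem_ne_zero_of_ne_bot hFne
    by_cases hcase : 1 / pθ.toReal = 1 / q.toReal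
    · -- degenerate case : `pθ = q` and the exponent is zero
      rw [hcase, sub_self, zero_div, Real.rpow_zero]
      have hpθq : pθ = q := by
        apply ennreal_eq_of_one_div_toReal_eq hpθ0 hq0 hcase
      have ht₀ : 0 < schattenNorm N pθ A₀ := schattenNorm_pos' hpθ0 hA₀
      set B := (schattenNorm N pθ A₀)⁻¹ • A₀ with hBdef
      have hBmem : B ∈ F := F.smul_mem _ hA₀F
      have hBn : schattenNorm N pθ B = 1 := by
        rw [hBdef, schattenNorm_smul' hN hpθ0 _ (inv_nonneg.mpr ht₀.le),
          inv_mul_cancel₀ ht₀.ne']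
      have h1mem : (1 : ℝ) ∈ {s : ℝ | ∃ A ∈ F, schattenNorm N pθ A ≤ 1
          ∧ s = schattenNorm N q A} := ⟨B, hBmem, hBn.le, by rw [← hpθq, hBn]⟩
      exact le_csSup (hbdd pθ hpθ0 F) h1mem
    · have hnum : 1 / pθ.toReal - 1 / q.toReal = θ * (1 / p.toReal - 1 / q.toReal) := by
        rw [hmean]; ring
      have hθ0' : θ ≠ 0 := by
        intro h
        rw [h, zero_mul] at hnum
        exact hcase (by linarith)
      have hden : 1 / p.toReal - 1 / q.toReal ≠ 0 := by
        intro h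
        rw [h, mul_zero] at hnum
        exact hcase (by linarith)
      have hα : (1 / pθ.toReal - 1 / q.toReal) / (1 / p.toReal - 1 / q.toReal) = θ := by
        rw [hnum, mul_div_assoc, div_self hden, mul_one]
      rw [hα]
      have hθpos : 0 < θ := lt_of_le_of_ne hθ0 (Ne.symm hθ0')
      by_cases hθeq1 : θ = 1
      · have hpp : 1 / pθ.toReal = 1 / p.toReal := by
          rw [hθeq1, one_mul] at hnum
          linarith
        have hpθp : pθ = p := ennreal_eq_of_one_div_toReal_eq hpθ0 hp0 hpp
        rw [hθeq1, Real.rpow_one, hpθp]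
        exact hcle F hF
      · have hθlt : θ < 1 := lt_of_le_of_ne hθ1 hθeq1
        have hpθtop : pθ ≠ ⊤ := by
          intro h
          have h0 : pθ.toReal = 0 := by rw [h]; exact ENNReal.toReal_top
          rw [h0] at hmean hcase
          simp only [div_zero] at hmean hcase
          have h1 : 0 ≤ (1 - θ) / q.toReal := div_nonneg (by linarith) ENNReal.toReal_nonneg
          have h2 : 0 ≤ θ / p.toReal := div_nonneg hθ0 ENNReal.toReal_nonneg
          have h3 : (1 - θ) / q.toReal = 0 := by linarith
          have h4 : q.toReal = 0 := by
            rcases div_eq_zero_iff.mp h3 with h' | h'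
            · exfalso; linarith
            · exact h'
          apply hcase
          rw [h4, div_zero]
      -- main case
        have hcF := hcle F hF
        by_cases hczero : gelfandNumber N p q n ≤ 0
        · have hceq : gelfandNumber N p q n = 0 := le_antisymm hczero hc0
          rw [hceq, Real.zero_rpow hθ0']
          exact hsup0 pθ hpθ0 F
        · push_neg at hczero
          by_contra hcon
          push_neg at hcon
          set S := sSup {s : ℝ | ∃ A ∈ F, schattenNorm N pθ A ≤ 1 ∧ s = schattenNorm N q A}
            with hSdef
          have hS0 : 0 ≤ S := hsup0 pθ hpθ0 F
          set b : ℝ := S ^ (1 / θ) with hbdef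
          have hbθ : b ^ θ = S := by
            rw [hbdef, ← Real.rpow_mul hS0, one_div_mul_cancel hθ0', Real.rpow_one]
          have hbc : b < gelfandNumber N p q n := by
            have h7 := Real.rpow_lt_rpow hS0 hcon (one_div_pos.mpr hθpos)
            rwa [← Real.rpow_mul hc0, mul_one_div_cancel hθ0', Real.rpow_one] at h7
          have hlt : b < sSup {s : ℝ | ∃ A ∈ F, schattenNorm N p A ≤ 1
              ∧ s = schattenNorm N q A} := hbc.trans_le hcF
          obtain ⟨s, hsmem, hbs⟩ := exists_lt_of_lt_csSup ⟨0, hmem0 p hp0 F⟩ hlt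
          obtain ⟨A, hAF, hAp, rfl⟩ := hsmem
          have hb0 : 0 ≤ b := Real.rpow_nonneg hS0 _
          have hAq0 : 0 < schattenNorm N q A := lt_of_le_of_lt hb0 hbs
          have hA0 : A ≠ 0 := by
            intro h
            rw [h, schattenNorm_zero' hN hq0] at hAq0
            exact lt_irrefl _ hAq0
          have ht₀ : 0 < schattenNorm N pθ A := schattenNorm_pos' hpθ0 hA0
          have hlw := littlewood' hp0 hq0 hpθ0 hpθtop hθpos hθlt hmean A
          have hAp1 : schattenNorm N p A ^ θ ≤ 1 :=
            Real.rpow_le_one (schattenNorm_nonneg' p A) hAp hθ0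
          have hlw2 : schattenNorm N pθ A ≤ schattenNorm N q A ^ (1 - θ) := by
            calc schattenNorm N pθ A
                ≤ schattenNorm N q A ^ (1 - θ) * schattenNorm N p A ^ θ := hlw
              _ ≤ schattenNorm N q A ^ (1 - θ) * 1 := mul_le_mul_of_nonneg_left hAp1
                  (Real.rpow_nonneg (schattenNorm_nonneg' q A) _)
              _ = schattenNorm N q A ^ (1 - θ) := mul_one _
          set B := (schattenNorm N pθ A)⁻¹ • A with hBdef
          have hBmem : B ∈ F := F.smul_mem _ hAF
          have hBpθ : schattenNorm N pθ B = 1 := by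
            rw [hBdef, schattenNorm_smul' hN hpθ0 _ (inv_nonneg.mpr ht₀.le),
              inv_mul_cancel₀ ht₀.ne']
          have hBq : schattenNorm N q B = (schattenNorm N pθ A)⁻¹ * schattenNorm N q A := by
            rw [hBdef, schattenNorm_smul' hN hq0 _ (inv_nonneg.mpr ht₀.le)]
          have hkey : schattenNorm N q A ^ θ ≤ schattenNorm N q B := by
            rw [hBq]
            have h8 : schattenNorm N q A ^ θ
                = schattenNorm N q A / schattenNorm N q A ^ (1 - θ) := by
              rw [eq_div_iff (Real.rpow_pos_of_pos hAq0 _).ne',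
                ← Real.rpow_add hAq0, show θ + (1 - θ) = 1 by ring, Real.rpow_one]
            rw [h8]
            calc schattenNorm N q A / schattenNorm N q A ^ (1 - θ)
                ≤ schattenNorm N q A / schattenNorm N pθ A :=
                  div_le_div_of_nonneg_left hAq0.le ht₀ hlw2
              _ = (schattenNorm N pθ A)⁻¹ * schattenNorm N q A := by
                  rw [div_eq_inv_mul]
          have hmemB : schattenNorm N q B ∈ {s : ℝ | ∃ A ∈ F, schattenNorm N pθ A ≤ 1
              ∧ s = schattenNorm N q A} := ⟨B, hBmem, hBpθ.le, rfl⟩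
          have hle2 : schattenNorm N q B ≤ S := le_csSup (hbdd pθ hpθ0 F) hmemB
          have hcontra : S < S := by
            calc S = b ^ θ := hbθ.symm
              _ < schattenNorm N q A ^ θ := Real.rpow_lt_rpow hb0 hbs hθpos
              _ ≤ schattenNorm N q B := hkey
              _ ≤ S := hle2
          exact lt_irrefl _ hcontra
end

section
/- Stationarity of approximation numbers under convex hull of the domain ball: if 0 < p ≤ 1 ≤ q ≤ ∞ and 1 ≤ n ≤ N², then a_n(S_p^N ↪ S_q^N) = a_n(S_1^N ↪ S_q^N). -/
open scoped ENNReal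

section SchattenAux

open Matrix Finset

variable {N : ℕ}

lemma sv_nonneg (A : Matrix (Fin N) (Fin N) ℝ) (i : Fin N) : 0 ≤ singularValues N A i :=
  Real.sqrt_nonneg _

lemma sv_sq (A : Matrix (Fin N) (Fin N) ℝ) (i : Fin N) :
    singularValues N A i ^ 2 = (Matrix.isHermitian_conjTranspose_mul_self A).eigenvalues i :=
  Real.sq_sqrt (Matrix.eigenvalues_conjTranspose_mul_self_nonneg A i)

lemma sum_eigenvalues_eq_trace {M : Matrix (Fin N) (Fin N) ℝ} (hM : M.IsHermitian) :
    ∑ i, hM.eigenvalues i = M.trace := by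
  nth_rewrite 2 [hM.spectral_theorem]
  rw [Unitary.conjStarAlgAut_apply, Matrix.trace_mul_cycle,
    Matrix.mem_unitaryGroup_iff'.mp (hM.eigenvectorUnitary).2, one_mul,
    Matrix.trace_diagonal]
  simp [RCLike.ofReal_real_eq_id]

lemma eig_zero_or_one {M : Matrix (Fin N) (Fin N) ℝ} (hM : M.IsHermitian)
    (hidem : M * M = M) (i : Fin N) :
    hM.eigenvalues i = 0 ∨ hM.eigenvalues i = 1 := by
  have h1 : M *ᵥ (WithLp.equiv 2 _) (hM.eigenvectorBasis i) =
      hM.eigenvalues i • (WithLp.equiv 2 _) (hM.eigenvectorBasis i) := hM.mulVec_eigenvectorBasis i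
  have h2 : (M * M) *ᵥ (WithLp.equiv 2 _) (hM.eigenvectorBasis i) =
      (hM.eigenvalues i * hM.eigenvalues i) • (WithLp.equiv 2 _) (hM.eigenvectorBasis i) := by
    rw [← Matrix.mulVec_mulVec, h1, Matrix.mulVec_smul, h1, smul_smul]
  rw [hidem, h1] at h2
  have hvne : (WithLp.equiv 2 ((_ : Fin N) → ℝ)) (hM.eigenvectorBasis i) ≠ 0 := by
    intro h
    exact hM.eigenvectorBasis.orthonormal.ne_zero i
      ((WithLp.equiv 2 _).injective (by simpa using h))
  have h3 : (hM.eigenvalues i - hM.eigenvalues i * hM.eigenvalues i) •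
      (WithLp.equiv 2 ((_ : Fin N) → ℝ)) (hM.eigenvectorBasis i) = 0 := by
    rw [sub_smul, h2, sub_self]
  rcases smul_eq_zero.mp h3 with h | h
  · rcases eq_or_ne (hM.eigenvalues i) 0 with h0 | h0
    · exact Or.inl h0
    · right
      have : hM.eigenvalues i * 1 = hM.eigenvalues i * hM.eigenvalues i := by linarith
      exact ((mul_right_inj' h0).mp this).symm
  · exact absurd h hvne

end SchattenAux


noncomputable section SVD

open Matrix

variable {N : ℕ}

lemma inner_euclid (x y : EuclideanSpace ℝ (Fin N)) :
    (inner ℝ x y : ℝ) = (WithLp.equiv 2 _) x ⬝ᵥ (WithLp.equiv 2 _) y := by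
  simp [PiLp.inner_apply, dotProduct, RCLike.inner_apply, WithLp.equiv]
  exact Finset.sum_congr rfl fun i _ => mul_comm _ _

lemma mulVec_dot_mulVec (A : Matrix (Fin N) (Fin N) ℝ) (x y : Fin N → ℝ) :
    (A *ᵥ x) ⬝ᵥ (A *ᵥ y) = x ⬝ᵥ ((Aᵀ * A) *ᵥ y) := by
  rw [← Matrix.mulVec_mulVec, Matrix.dotProduct_mulVec x, Matrix.vecMul_transpose]

lemma ata_mulVec_eigen (A : Matrix (Fin N) (Fin N) ℝ) (i : Fin N) :
    (Aᵀ * A) *ᵥ (WithLp.equiv 2 _) ((Matrix.isHermitian_conjTranspose_mul_self A).eigenvectorBasis i) =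
      (Matrix.isHermitian_conjTranspose_mul_self A).eigenvalues i •
        (WithLp.equiv 2 _) ((Matrix.isHermitian_conjTranspose_mul_self A).eigenvectorBasis i) := by
  have e : Aᵀ * A = Aᴴ * A := by
    rw [Matrix.conjTranspose_eq_transpose_of_trivial]
  rw [e]
  exact (Matrix.isHermitian_conjTranspose_mul_self A).mulVec_eigenvectorBasis i

lemma exists_svd (A : Matrix (Fin N) (Fin N) ℝ) :
    ∃ U V : OrthonormalBasis (Fin N) ℝ (EuclideanSpace ℝ (Fin N)),
      ∀ i, A *ᵥ (WithLp.equiv 2 _) (V i) = singularValues N A i • (WithLp.equiv 2 _) (U i) := by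
  classical
  set hA := Matrix.isHermitian_conjTranspose_mul_self A with hhA
  set V := hA.eigenvectorBasis with hV
  set σ := singularValues N A with hσ
  have hdot : ∀ i j, (A *ᵥ (WithLp.equiv 2 _) (V i)) ⬝ᵥ (A *ᵥ (WithLp.equiv 2 _) (V j)) =
      hA.eigenvalues j * (if i = j then 1 else 0) := by
    intro i j
    rw [mulVec_dot_mulVec, ata_mulVec_eigen, dotProduct_smul, smul_eq_mul]
    congr 1
    have := orthonormal_iff_ite.mp V.orthonormal i j
    rw [← inner_euclid]
    exact_mod_cast this
  have hσsq : ∀ i, σ i ^ 2 = hA.eigenvalues i := fun i => sv_sq A i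
  have hσnn : ∀ i, 0 ≤ σ i := fun i => sv_nonneg A i
  set s : Set (Fin N) := {i | hA.eigenvalues i ≠ 0} with hs
  set w : Fin N → EuclideanSpace ℝ (Fin N) :=
    fun i => (σ i)⁻¹ • (WithLp.equiv 2 _).symm (A *ᵥ (WithLp.equiv 2 _) (V i)) with hw
  have hσne : ∀ i ∈ s, σ i ≠ 0 := by
    intro i hi
    have h1 : hA.eigenvalues i ≠ 0 := hi
    intro h0
    exact h1 (by rw [← hσsq i, h0]; ring)
  have hinner : ∀ i j, (inner ℝ (w i) (w j) : ℝ) =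
      (σ i)⁻¹ * ((σ j)⁻¹ * (hA.eigenvalues j * (if i = j then 1 else 0))) := by
    intro i j
    simp only [hw]
    rw [real_inner_smul_left, real_inner_smul_right, inner_euclid]
    simp only [Equiv.apply_symm_apply]
    rw [hdot i j]
  have horth : Orthonormal ℝ (s.restrict w) := by
    rw [orthonormal_iff_ite]
    rintro ⟨i, hi⟩ ⟨j, hj⟩
    change inner ℝ (w i) (w j) = _
    rw [hinner i j]
    rcases eq_or_ne i j with rfl | hij
    · simp only [if_pos rfl, Subtype.mk_eq_mk]
      have hssq : σ i * σ i = hA.eigenvalues i := by rw [← hσsq i]; ring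
      rw [← hssq]
      field_simp [hσne i hi]
    · rw [if_neg hij]
      rw [if_neg (by simpa [Subtype.mk_eq_mk] using hij : ¬(⟨i, hi⟩ : s) = ⟨j, hj⟩)]
      ring
  obtain ⟨U, hU⟩ := horth.exists_orthonormalBasis_extension_of_card_eq
    (by simp [finrank_euclideanSpace])
  refine ⟨U, V, fun i => ?_⟩
  rcases eq_or_ne (hA.eigenvalues i) 0 with h0 | h0
  · have hz : A *ᵥ (WithLp.equiv 2 _) (V i) = 0 := by
      have h2 := hdot i i
      rw [if_pos rfl, h0, zero_mul] at h2
      exact dotProduct_self_eq_zero.mp h2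
    have hσ0 : σ i = 0 := by
      have h3 := hσsq i
      rw [h0] at h3
      nlinarith [hσnn i]
    rw [hz, hσ0, zero_smul]
  · have hUi : U i = w i := hU i h0
    rw [hUi]
    simp only [hw, WithLp.equiv_apply, WithLp.ofLp_smul, WithLp.equiv_symm_apply, WithLp.ofLp_toLp, smul_smul]
    rw [mul_inv_cancel₀ (hσne i h0), one_smul]

end SVD


noncomputable section Diag

open Matrix Finset

variable {N : ℕ}

lemma dot_sum (v : Fin N → ℝ) (g : Fin N → Fin N → ℝ) :
    v ⬝ᵥ (∑ i, g i) = ∑ i, v ⬝ᵥ g i := by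
  simp only [dotProduct, Finset.sum_apply, Finset.mul_sum]
  rw [Finset.sum_comm]

lemma expand_vec (V : OrthonormalBasis (Fin N) ℝ (EuclideanSpace ℝ (Fin N))) (x : Fin N → ℝ) :
    x = ∑ i, ((WithLp.equiv 2 _) (V i) ⬝ᵥ x) • (WithLp.equiv 2 _) (V i) := by
  have h := V.sum_repr' ((WithLp.equiv 2 _).symm x)
  have h2 := congrArg (WithLp.linearEquiv 2 ℝ ((Fin N) → ℝ)) h
  rw [map_sum] at h2
  simp only [_root_.map_smul, WithLp.coe_linearEquiv, WithLp.equiv_symm_apply, WithLp.ofLp_toLp] at h2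
  conv_lhs => rw [← h2]
  refine Finset.sum_congr rfl fun i _ => ?_
  congr 1
  exact inner_euclid _ _

lemma svd_mulVec (A : Matrix (Fin N) (Fin N) ℝ)
    (U V : OrthonormalBasis (Fin N) ℝ (EuclideanSpace ℝ (Fin N)))
    (hsvd : ∀ i, A *ᵥ (WithLp.equiv 2 _) (V i) =
      singularValues N A i • (WithLp.equiv 2 _) (U i)) (x : Fin N → ℝ) :
    A *ᵥ x = ∑ i, (((WithLp.equiv 2 _) (V i) ⬝ᵥ x) * singularValues N A i) •
      (WithLp.equiv 2 _) (U i) := by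
  have h1 : A *ᵥ x = A.mulVecLin (∑ i, ((WithLp.equiv 2 _) (V i) ⬝ᵥ x) •
      (WithLp.equiv 2 _) (V i)) := by
    rw [Matrix.mulVecLin_apply, ← expand_vec]
  rw [h1, map_sum]
  refine Finset.sum_congr rfl fun i _ => ?_
  rw [_root_.map_smul, Matrix.mulVecLin_apply, hsvd i, smul_smul]

lemma diag_entry (A : Matrix (Fin N) (Fin N) ℝ)
    (U V : OrthonormalBasis (Fin N) ℝ (EuclideanSpace ℝ (Fin N)))
    (hsvd : ∀ i, A *ᵥ (WithLp.equiv 2 _) (V i) =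
      singularValues N A i • (WithLp.equiv 2 _) (U i))
    (e f : OrthonormalBasis (Fin N) ℝ (EuclideanSpace ℝ (Fin N))) (k : Fin N) :
    (WithLp.equiv 2 _) (f k) ⬝ᵥ (A *ᵥ (WithLp.equiv 2 _) (e k)) =
      ∑ j, singularValues N A j *
        (((WithLp.equiv 2 _) (f k) ⬝ᵥ (WithLp.equiv 2 _) (U j)) *
         ((WithLp.equiv 2 _) (V j) ⬝ᵥ (WithLp.equiv 2 _) (e k))) := by
  rw [svd_mulVec A U V hsvd, dot_sum]
  refine Finset.sum_congr rfl fun j _ => ?_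
  rw [dotProduct_smul]
  simp only [smul_eq_mul]
  ring

lemma parseval_dot (b : OrthonormalBasis (Fin N) ℝ (EuclideanSpace ℝ (Fin N)))
    (x : EuclideanSpace ℝ (Fin N)) (hx : ‖x‖ = 1) :
    ∑ j, ((WithLp.equiv 2 _) x ⬝ᵥ (WithLp.equiv 2 _) (b j)) ^ 2 = 1 := by
  have h := b.sum_inner_mul_inner x x
  have hxx : (inner ℝ x x : ℝ) = 1 := by
    rw [real_inner_self_eq_norm_sq, hx]; norm_num
  rw [hxx] at h
  rw [← h]
  refine Finset.sum_congr rfl fun j _ => ?_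
  rw [← inner_euclid, sq]
  congr 1
  exact real_inner_comm _ _

end Diag


noncomputable section Core

open Matrix Finset

variable {N : ℕ}

/-- The diagonal of `A` with respect to a pair of orthonormal bases. -/
def diagVec (A : Matrix (Fin N) (Fin N) ℝ)
    (e f : OrthonormalBasis (Fin N) ℝ (EuclideanSpace ℝ (Fin N))) : Fin N → ℝ :=
  fun k => (WithLp.equiv 2 _) (f k) ⬝ᵥ (A *ᵥ (WithLp.equiv 2 _) (e k))

lemma diag_bounds (A : Matrix (Fin N) (Fin N) ℝ)
    (e f : OrthonormalBasis (Fin N) ℝ (EuclideanSpace ℝ (Fin N))) :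
    (∀ k, |diagVec A e f k| ≤ ⨆ j, singularValues N A j) ∧
    (∀ r : ℝ, 1 ≤ r → ∑ k, |diagVec A e f k| ^ r ≤ ∑ j, singularValues N A j ^ r) := by
  obtain ⟨U, V, hsvd⟩ := exists_svd A
  set σ := singularValues N A with hσ
  set c : Fin N → Fin N → ℝ := fun k j =>
    (((WithLp.equiv 2 _) (f k) ⬝ᵥ (WithLp.equiv 2 _) (U j)) ^ 2 +
     ((WithLp.equiv 2 _) (V j) ⬝ᵥ (WithLp.equiv 2 _) (e k)) ^ 2) / 2 with hc
  have hc0 : ∀ k j, 0 ≤ c k j := by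
    intro k j
    simp only [hc]
    positivity
  have hrow : ∀ k, ∑ j, c k j = 1 := by
    intro k
    simp only [hc]
    rw [← Finset.sum_div, Finset.sum_add_distrib]
    rw [parseval_dot U (f k) (f.orthonormal.1 k)]
    have h2 : ∑ j, ((WithLp.equiv 2 _) (V j) ⬝ᵥ (WithLp.equiv 2 _) (e k)) ^ 2 = 1 := by
      rw [← parseval_dot V (e k) (e.orthonormal.1 k)]
      exact Finset.sum_congr rfl fun j _ => by rw [dotProduct_comm]
    rw [h2]
    norm_num
  have hcol : ∀ j, ∑ k, c k j = 1 := by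
    intro j
    simp only [hc]
    rw [← Finset.sum_div, Finset.sum_add_distrib]
    have h1 : ∑ k, ((WithLp.equiv 2 _) (f k) ⬝ᵥ (WithLp.equiv 2 _) (U j)) ^ 2 = 1 := by
      rw [← parseval_dot f (U j) (U.orthonormal.1 j)]
      exact Finset.sum_congr rfl fun k _ => by rw [dotProduct_comm]
    rw [h1, parseval_dot e (V j) (V.orthonormal.1 j)]
    norm_num
  have habs : ∀ k, |diagVec A e f k| ≤ ∑ j, c k j * σ j := by
    intro k
    have hd : diagVec A e f k = ∑ j, σ j *
        (((WithLp.equiv 2 _) (f k) ⬝ᵥ (WithLp.equiv 2 _) (U j)) *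
         ((WithLp.equiv 2 _) (V j) ⬝ᵥ (WithLp.equiv 2 _) (e k))) :=
      diag_entry A U V hsvd e f k
    rw [hd]
    refine (Finset.abs_sum_le_sum_abs _ _).trans (Finset.sum_le_sum fun j _ => ?_)
    have h1 : |σ j * (((WithLp.equiv 2 _) (f k) ⬝ᵥ (WithLp.equiv 2 _) (U j)) *
        ((WithLp.equiv 2 _) (V j) ⬝ᵥ (WithLp.equiv 2 _) (e k)))| =
        σ j * |((WithLp.equiv 2 _) (f k) ⬝ᵥ (WithLp.equiv 2 _) (U j)) *
        ((WithLp.equiv 2 _) (V j) ⬝ᵥ (WithLp.equiv 2 _) (e k))| := by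
      rw [abs_mul, abs_of_nonneg (sv_nonneg A j)]
    rw [h1]
    have h2 : |((WithLp.equiv 2 _) (f k) ⬝ᵥ (WithLp.equiv 2 _) (U j)) *
        ((WithLp.equiv 2 _) (V j) ⬝ᵥ (WithLp.equiv 2 _) (e k))| ≤ c k j := by
      simp only [hc]
      rw [abs_mul]
      nlinarith [sq_nonneg (|(WithLp.equiv 2 _) (f k) ⬝ᵥ (WithLp.equiv 2 _) (U j)| -
        |(WithLp.equiv 2 _) (V j) ⬝ᵥ (WithLp.equiv 2 _) (e k)|),
        sq_abs ((WithLp.equiv 2 _) (f k) ⬝ᵥ (WithLp.equiv 2 _) (U j)),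
        sq_abs ((WithLp.equiv 2 _) (V j) ⬝ᵥ (WithLp.equiv 2 _) (e k)),
        abs_nonneg ((WithLp.equiv 2 _) (f k) ⬝ᵥ (WithLp.equiv 2 _) (U j)),
        abs_nonneg ((WithLp.equiv 2 _) (V j) ⬝ᵥ (WithLp.equiv 2 _) (e k))]
    calc σ j * |((WithLp.equiv 2 _) (f k) ⬝ᵥ (WithLp.equiv 2 _) (U j)) *
        ((WithLp.equiv 2 _) (V j) ⬝ᵥ (WithLp.equiv 2 _) (e k))|
        ≤ σ j * c k j := mul_le_mul_of_nonneg_left h2 (sv_nonneg A j)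
      _ = c k j * σ j := mul_comm _ _
  constructor
  · intro k
    refine (habs k).trans ?_
    have hS : ∀ j, σ j ≤ ⨆ i, σ i := fun j =>
      le_ciSup (Set.Finite.bddAbove (Set.finite_range σ)) j
    calc ∑ j, c k j * σ j ≤ ∑ j, c k j * (⨆ i, σ i) :=
        Finset.sum_le_sum fun j _ => mul_le_mul_of_nonneg_left (hS j) (hc0 k j)
      _ = ⨆ i, σ i := by rw [← Finset.sum_mul, hrow k, one_mul]
  · intro r hr
    have hr0 : (0:ℝ) ≤ r := le_trans zero_le_one hr
    calc ∑ k, |diagVec A e f k| ^ r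
        ≤ ∑ k, (∑ j, c k j * σ j) ^ r :=
          Finset.sum_le_sum fun k _ => Real.rpow_le_rpow (abs_nonneg _) (habs k) hr0
      _ ≤ ∑ k, ∑ j, c k j * σ j ^ r :=
          Finset.sum_le_sum fun k _ => Real.rpow_arith_mean_le_arith_mean_rpow univ (c k) σ
            (fun j _ => hc0 k j) (hrow k) (fun j _ => sv_nonneg A j) hr
      _ = ∑ j, ∑ k, c k j * σ j ^ r := Finset.sum_comm
      _ = ∑ j, σ j ^ r := by
          refine Finset.sum_congr rfl fun j _ => ?_
          rw [← Finset.sum_mul, hcol j, one_mul]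

/-- `ℓ_q` norm of a vector of reals, `1 ≤ q ≤ ∞`. -/
def qVecNorm (q : ℝ≥0∞) (x : Fin N → ℝ) : ℝ :=
  if q = ⊤ then ⨆ k, |x k| else (∑ k, |x k| ^ q.toReal) ^ (1 / q.toReal)

lemma qVecNorm_eq_norm (q : ℝ≥0∞) (hq : 1 ≤ q) (x : Fin N → ℝ) :
    qVecNorm q x = @norm (PiLp q (fun _ : Fin N => ℝ)) (by
      haveI : Fact (1 ≤ q) := ⟨hq⟩
      infer_instance) ((WithLp.equiv q _).symm x) := by
  haveI : Fact (1 ≤ q) := ⟨hq⟩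
  rcases eq_or_ne q ⊤ with rfl | hqt
  · rw [qVecNorm, if_pos rfl, PiLp.norm_eq_ciSup]
    rfl
  · rw [qVecNorm, if_neg hqt, PiLp.norm_eq_sum]
    · rfl
    · exact ENNReal.toReal_pos (by intro h0; rw [h0] at hq; exact absurd hq (by simp)) hqt

lemma schattenNorm_eq_qVecNorm (q : ℝ≥0∞) (A : Matrix (Fin N) (Fin N) ℝ) :
    schattenNorm N q A = qVecNorm q (singularValues N A) := by
  rcases eq_or_ne q ⊤ with rfl | hqt
  · rw [schattenNorm, if_pos rfl, qVecNorm, if_pos rfl]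
    exact iSup_congr fun i => (abs_of_nonneg (sv_nonneg A i)).symm
  · rw [schattenNorm, if_neg hqt, qVecNorm, if_neg hqt]
    congr 1
    exact Finset.sum_congr rfl fun i _ => by rw [abs_of_nonneg (sv_nonneg A i)]

lemma qVecNorm_nonneg (q : ℝ≥0∞) (x : Fin N → ℝ) : 0 ≤ qVecNorm q x := by
  rcases eq_or_ne q ⊤ with rfl | hqt
  · rw [qVecNorm, if_pos rfl]
    exact Real.iSup_nonneg fun k => abs_nonneg _
  · rw [qVecNorm, if_neg hqt]
    positivity

/-- The diagonal of a matrix w.r.t. any pair of orthonormal bases is dominated by the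
Schatten `q`-norm, `1 ≤ q`. -/
lemma qVecNorm_diagVec_le (q : ℝ≥0∞) (hq : 1 ≤ q) (A : Matrix (Fin N) (Fin N) ℝ)
    (e f : OrthonormalBasis (Fin N) ℝ (EuclideanSpace ℝ (Fin N))) :
    qVecNorm q (diagVec A e f) ≤ schattenNorm N q A := by
  obtain ⟨hsup, hsum⟩ := diag_bounds A e f
  rcases eq_or_ne q ⊤ with rfl | hqt
  · rw [qVecNorm, if_pos rfl, schattenNorm, if_pos rfl]
    rcases Nat.eq_zero_or_pos N with hN | hN
    · subst hN
      simp [Real.iSup_of_isEmpty]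
    · haveI : Nonempty (Fin N) := ⟨⟨0, hN⟩⟩
      exact ciSup_le fun k => hsup k
  · have hr : (1:ℝ) ≤ q.toReal := by
      rw [← ENNReal.toReal_one]
      exact ENNReal.toReal_mono hqt hq
    rw [qVecNorm, if_neg hqt, schattenNorm, if_neg hqt]
    have h1 : ∑ i, singularValues N A i ^ q.toReal =
        ∑ i, |singularValues N A i| ^ q.toReal := by
      exact Finset.sum_congr rfl fun i _ => by rw [abs_of_nonneg (sv_nonneg A i)]
    refine Real.rpow_le_rpow ?_ ?_ ?_
    · positivity
    · exact hsum _ hr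
    · positivity

/-- There exist orthonormal bases whose diagonal realizes the Schatten norm. -/
lemma exists_diagVec_eq (A : Matrix (Fin N) (Fin N) ℝ) :
    ∃ e f : OrthonormalBasis (Fin N) ℝ (EuclideanSpace ℝ (Fin N)),
      diagVec A e f = singularValues N A := by
  obtain ⟨U, V, hsvd⟩ := exists_svd A
  refine ⟨V, U, ?_⟩
  funext k
  show (WithLp.equiv 2 _) (U k) ⬝ᵥ (A *ᵥ (WithLp.equiv 2 _) (V k)) = singularValues N A k
  rw [hsvd k, dotProduct_smul, smul_eq_mul]
  have : (WithLp.equiv 2 _) (U k) ⬝ᵥ (WithLp.equiv 2 _) (U k) = 1 := by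
    rw [← inner_euclid, real_inner_self_eq_norm_sq, U.orthonormal.1 k]
    norm_num
  rw [this, mul_one]

/-- Convexity: `ℓ_q` norm of a nonnegative combination. -/
lemma qVecNorm_sum_smul_le (q : ℝ≥0∞) (hq : 1 ≤ q) (c : Fin N → ℝ) (hc : ∀ i, 0 ≤ c i)
    (X : Fin N → Fin N → ℝ) :
    qVecNorm q (∑ i, c i • X i) ≤ ∑ i, c i * qVecNorm q (X i) := by
  haveI : Fact (1 ≤ q) := ⟨hq⟩
  have key : ∀ y : Fin N → ℝ, qVecNorm q y = ‖(WithLp.equiv q ((Fin N) → ℝ)).symm y‖ :=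
    fun y => qVecNorm_eq_norm q hq y
  rw [key]
  have hmap : (WithLp.equiv q ((Fin N) → ℝ)).symm (∑ i, c i • X i) =
      ∑ i, c i • (WithLp.equiv q ((Fin N) → ℝ)).symm (X i) := by
    have := map_sum ((WithLp.linearEquiv q ℝ ((Fin N) → ℝ)).symm) (fun i => c i • X i) Finset.univ
    simp only [_root_.map_smul] at this
    exact this
  rw [hmap]
  refine (norm_sum_le _ _).trans ?_
  refine Finset.sum_le_sum fun i _ => ?_
  rw [norm_smul, Real.norm_eq_abs, abs_of_nonneg (hc i), key (X i)]

end Core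


noncomputable section RankOne

open Matrix Finset

variable {N : ℕ}

lemma schattenNorm_one_eq (A : Matrix (Fin N) (Fin N) ℝ) :
    schattenNorm N 1 A = ∑ i, singularValues N A i := by
  rw [schattenNorm, if_neg (by simp : (1:ℝ≥0∞) ≠ ⊤)]
  simp [ENNReal.toReal_one, Real.rpow_one]

lemma schattenNorm_rankOne_le (p : ℝ≥0∞) (hp0 : 0 < p) (hp1 : p ≤ 1)
    (u v : EuclideanSpace ℝ (Fin N)) (hu : ‖u‖ = 1) (hv : ‖v‖ = 1) :
    schattenNorm N p (vecMulVec ((WithLp.equiv 2 _) u) ((WithLp.equiv 2 _) v)) ≤ 1 := by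
  classical
  have hptop : p ≠ ⊤ := by
    intro h; rw [h] at hp1; exact absurd hp1 (by simp)
  have hpt : 0 < p.toReal := ENNReal.toReal_pos hp0.ne' hptop
  set u' := (WithLp.equiv 2 _) u with hu'
  set v' := (WithLp.equiv 2 _) v with hv'
  set R := vecMulVec u' v' with hR
  have hdotu : u' ⬝ᵥ u' = 1 := by
    rw [← inner_euclid, real_inner_self_eq_norm_sq, hu]; norm_num
  have hdotv : v' ⬝ᵥ v' = 1 := by
    rw [← inner_euclid, real_inner_self_eq_norm_sq, hv]; norm_num
  have hRR : Rᴴ * R = vecMulVec v' v' := by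
    ext i j
    simp only [Matrix.mul_apply, Matrix.conjTranspose_apply, hR, Matrix.vecMulVec_apply,
      star_trivial]
    have h1 : ∀ l, u' l * v' i * (u' l * v' j) = u' l * u' l * (v' i * v' j) := fun l => by ring
    rw [Finset.sum_congr rfl fun l _ => h1 l, ← Finset.sum_mul]
    have h2 : ∑ l, u' l * u' l = u' ⬝ᵥ u' := rfl
    rw [h2, hdotu, one_mul]
  have hidem : (Rᴴ * R) * (Rᴴ * R) = Rᴴ * R := by
    rw [hRR]
    ext i j
    simp only [Matrix.mul_apply, Matrix.vecMulVec_apply]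
    have h1 : ∀ l, v' i * v' l * (v' l * v' j) = v' l * v' l * (v' i * v' j) := fun l => by ring
    rw [Finset.sum_congr rfl fun l _ => h1 l, ← Finset.sum_mul]
    have h2 : ∑ l, v' l * v' l = v' ⬝ᵥ v' := rfl
    rw [h2, hdotv, one_mul]
  have hsv01 : ∀ i, singularValues N R i ^ p.toReal =
      (Matrix.isHermitian_conjTranspose_mul_self R).eigenvalues i := by
    intro i
    rcases eig_zero_or_one (Matrix.isHermitian_conjTranspose_mul_self R) hidem i with h | h
    · rw [singularValues, h, Real.sqrt_zero, Real.zero_rpow hpt.ne']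
    · rw [singularValues, h, Real.sqrt_one, Real.one_rpow]
  have hsum : ∑ i, singularValues N R i ^ p.toReal = 1 := by
    rw [Finset.sum_congr rfl fun i _ => hsv01 i,
      sum_eigenvalues_eq_trace (Matrix.isHermitian_conjTranspose_mul_self R), hRR]
    rw [Matrix.trace]
    simp only [Matrix.diag_apply, Matrix.vecMulVec_apply]
    rw [show ∑ i, v' i * v' i = v' ⬝ᵥ v' from rfl, hdotv]
  rw [schattenNorm, if_neg hptop, hsum, Real.one_rpow]

lemma exists_svd_matrix (A : Matrix (Fin N) (Fin N) ℝ) :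
    ∃ U V : OrthonormalBasis (Fin N) ℝ (EuclideanSpace ℝ (Fin N)),
      A = ∑ i, singularValues N A i •
        vecMulVec ((WithLp.equiv 2 _) (U i)) ((WithLp.equiv 2 _) (V i)) := by
  obtain ⟨U, V, hsvd⟩ := exists_svd A
  refine ⟨U, V, ?_⟩
  ext j k
  have h := congrFun (svd_mulVec A U V hsvd (Pi.single k 1)) j
  simp only [Matrix.mulVec_single, mul_one, Finset.sum_apply, Pi.smul_apply, smul_eq_mul,
    dotProduct_single, MulOpposite.op_one, one_smul, Matrix.col_apply] at h
  simp only [Matrix.sum_apply, Matrix.smul_apply, Matrix.vecMulVec_apply, smul_eq_mul]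
  rw [h]
  exact Finset.sum_congr rfl fun i _ => by ring

lemma ball_facts (p : ℝ≥0∞) (hp0 : 0 < p) (hp1 : p ≤ 1) (A : Matrix (Fin N) (Fin N) ℝ)
    (hA : schattenNorm N p A ≤ 1) :
    (∀ i, singularValues N A i ≤ 1) ∧ schattenNorm N 1 A ≤ 1 := by
  have hptop : p ≠ ⊤ := by
    intro h; rw [h] at hp1; exact absurd hp1 (by simp)
  set r := p.toReal with hr
  have hr0 : 0 < r := ENNReal.toReal_pos hp0.ne' hptop
  have hr1 : r ≤ 1 := by
    rw [hr, ← ENNReal.toReal_one]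
    exact ENNReal.toReal_mono (by simp) hp1
  rw [schattenNorm, if_neg hptop] at hA
  set S := ∑ i, singularValues N A i ^ r with hS
  have hS0 : 0 ≤ S := Finset.sum_nonneg fun i _ => Real.rpow_nonneg (sv_nonneg A i) r
  have hS1 : S ≤ 1 := by
    have h1 : (S ^ (1/r)) ^ r ≤ (1:ℝ) ^ r :=
      Real.rpow_le_rpow (Real.rpow_nonneg hS0 _) hA hr0.le
    rwa [Real.one_rpow, ← Real.rpow_mul hS0, one_div_mul_cancel hr0.ne',
      Real.rpow_one] at h1
  have hsv1 : ∀ i, singularValues N A i ≤ 1 := by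
    intro i
    by_contra hgt
    push_neg at hgt
    have h2 : (1:ℝ) ^ r < singularValues N A i ^ r :=
      Real.rpow_lt_rpow zero_le_one hgt hr0
    rw [Real.one_rpow] at h2
    have h3 : singularValues N A i ^ r ≤ S :=
      Finset.single_le_sum (fun j _ => Real.rpow_nonneg (sv_nonneg A j) r) (Finset.mem_univ i)
    linarith
  refine ⟨hsv1, ?_⟩
  rw [schattenNorm_one_eq]
  have h4 : ∀ i, singularValues N A i ≤ singularValues N A i ^ r := by
    intro i
    rcases eq_or_lt_of_le (sv_nonneg A i) with h0 | h0
    · rw [← h0, Real.zero_rpow hr0.ne']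
    · have := Real.rpow_le_rpow_of_exponent_ge h0 (hsv1 i) hr1
      rwa [Real.rpow_one] at this
  calc ∑ i, singularValues N A i ≤ ∑ i, singularValues N A i ^ r :=
        Finset.sum_le_sum fun i _ => h4 i
    _ ≤ 1 := hS1

end RankOne


noncomputable section Key

open Matrix Finset

variable {N : ℕ}

lemma diagVec_sum_smul (c : Fin N → ℝ) (M : Fin N → Matrix (Fin N) (Fin N) ℝ)
    (e f : OrthonormalBasis (Fin N) ℝ (EuclideanSpace ℝ (Fin N))) :
    diagVec (∑ i, c i • M i) e f = ∑ i, c i • diagVec (M i) e f := by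
  funext k
  let D : Matrix (Fin N) (Fin N) ℝ →ₗ[ℝ] ℝ :=
    { toFun := fun B => (WithLp.equiv 2 _) (f k) ⬝ᵥ (B *ᵥ (WithLp.equiv 2 _) (e k))
      map_add' := fun a b => by
        beta_reduce
        rw [Matrix.add_mulVec, dotProduct_add]
      map_smul' := fun r a => by
        beta_reduce
        rw [Matrix.smul_mulVec, dotProduct_smul]
        rfl }
  have h := map_sum D (fun i => c i • M i) Finset.univ
  simp only [_root_.map_smul, smul_eq_mul] at h
  show D (∑ i, c i • M i) = _
  rw [h]
  simp only [Finset.sum_apply, Pi.smul_apply, smul_eq_mul]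
  rfl

lemma key_convex (p q : ℝ≥0∞) (hp0 : 0 < p) (hp1 : p ≤ 1) (hq : 1 ≤ q)
    (T : Matrix (Fin N) (Fin N) ℝ →ₗ[ℝ] Matrix (Fin N) (Fin N) ℝ)
    (A : Matrix (Fin N) (Fin N) ℝ) (hA1 : schattenNorm N 1 A ≤ 1)
    (C : ℝ) (hC0 : 0 ≤ C)
    (hC : ∀ B, schattenNorm N p B ≤ 1 → schattenNorm N q (B - T B) ≤ C) :
    schattenNorm N q (A - T A) ≤ C := by
  classical
  set L : Matrix (Fin N) (Fin N) ℝ →ₗ[ℝ] Matrix (Fin N) (Fin N) ℝ := LinearMap.id - T with hL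
  have hLapp : ∀ B, L B = B - T B := fun B => rfl
  obtain ⟨U, V, hAeq⟩ := exists_svd_matrix A
  set σ := singularValues N A with hσ
  set R : Fin N → Matrix (Fin N) (Fin N) ℝ := fun i =>
    vecMulVec ((WithLp.equiv 2 _) (U i)) ((WithLp.equiv 2 _) (V i)) with hRdef
  have hσ1 : ∑ i, σ i ≤ 1 := by
    rw [hσ, ← schattenNorm_one_eq]
    exact hA1
  have hLA : L A = ∑ i, σ i • L (R i) := by
    conv_lhs => rw [hAeq]
    rw [map_sum]
    exact Finset.sum_congr rfl fun i _ => by rw [_root_.map_smul]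
  obtain ⟨e, f, hef⟩ := exists_diagVec_eq (L A)
  have h2 : schattenNorm N q (L A) = qVecNorm q (diagVec (L A) e f) := by
    rw [hef, ← schattenNorm_eq_qVecNorm]
  have h3 : diagVec (L A) e f = ∑ i, σ i • diagVec (L (R i)) e f := by
    conv_lhs => rw [hLA]
    exact diagVec_sum_smul σ (fun i => L (R i)) e f
  have hgoal : schattenNorm N q (A - T A) = schattenNorm N q (L A) := by
    rw [hLapp]
  rw [hgoal, h2, h3]
  calc qVecNorm q (∑ i, σ i • diagVec (L (R i)) e f)
      ≤ ∑ i, σ i * qVecNorm q (diagVec (L (R i)) e f) :=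
        qVecNorm_sum_smul_le q hq σ (fun i => sv_nonneg A i) _
    _ ≤ ∑ i, σ i * C := by
        refine Finset.sum_le_sum fun i _ => ?_
        refine mul_le_mul_of_nonneg_left ?_ (sv_nonneg A i)
        refine (qVecNorm_diagVec_le q hq (L (R i)) e f).trans ?_
        rw [hLapp]
        exact hC (R i) (schattenNorm_rankOne_le p hp0 hp1 (U i) (V i)
          (U.orthonormal.1 i) (V.orthonormal.1 i))
    _ = (∑ i, σ i) * C := (Finset.sum_mul _ _ _).symm
    _ ≤ 1 * C := mul_le_mul_of_nonneg_right hσ1 hC0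
    _ = C := one_mul C

end Key


noncomputable section Assemble

open Matrix Finset

variable {N : ℕ}

lemma sv_zero_matrix (i : Fin N) :
    singularValues N (0 : Matrix (Fin N) (Fin N) ℝ) i = 0 := by
  have h := (Matrix.isHermitian_conjTranspose_mul_self (0 : Matrix (Fin N) (Fin N) ℝ)).mulVec_eigenvectorBasis i
  have h0 : ((0 : Matrix (Fin N) (Fin N) ℝ)ᴴ * 0) = 0 := by simp
  have hgen : ∀ (M : Matrix (Fin N) (Fin N) ℝ), M = 0 → ∀ x : Fin N → ℝ, M *ᵥ x = 0 :=
    fun M hM x => by rw [hM, Matrix.zero_mulVec]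
  rw [hgen _ h0 _] at h
  have hvne : (WithLp.equiv 2 ((_ : Fin N) → ℝ))
      ((Matrix.isHermitian_conjTranspose_mul_self (0 : Matrix (Fin N) (Fin N) ℝ)).eigenvectorBasis i) ≠ 0 := by
    intro hz2
    exact (Matrix.isHermitian_conjTranspose_mul_self
        (0 : Matrix (Fin N) (Fin N) ℝ)).eigenvectorBasis.orthonormal.ne_zero i
      ((WithLp.equiv 2 _).injective (by simpa using hz2))
  have hval : (Matrix.isHermitian_conjTranspose_mul_self
      (0 : Matrix (Fin N) (Fin N) ℝ)).eigenvalues i = 0 := by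
    rcases smul_eq_zero.mp h.symm with h1 | h1
    · exact h1
    · exact absurd h1 hvne
  show Real.sqrt _ = 0
  rw [hval, Real.sqrt_zero]

lemma schattenNorm_zero_matrix (q : ℝ≥0∞) (hq : q = ⊤ ∨ 0 < q.toReal) :
    schattenNorm N q (0 : Matrix (Fin N) (Fin N) ℝ) = 0 := by
  rcases hq with rfl | hq
  · rw [schattenNorm, if_pos rfl]
    simp only [sv_zero_matrix]
    exact Real.iSup_const_zero
  · have hqt : q ≠ ⊤ := by
      intro h; rw [h] at hq; simp at hq
    rw [schattenNorm, if_neg hqt]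
    simp only [sv_zero_matrix]
    rw [Real.zero_rpow hq.ne', Finset.sum_const, smul_zero,
      Real.zero_rpow (by positivity : 1 / q.toReal ≠ 0)]

lemma sv_le_sum_abs (M : Matrix (Fin N) (Fin N) ℝ) (j : Fin N) :
    singularValues N M j ≤ ∑ a, ∑ b, |M a b| := by
  set hA := Matrix.isHermitian_conjTranspose_mul_self M with hhA
  set S := ∑ a, ∑ b, |M a b| with hS
  have hS0 : 0 ≤ S := by positivity
  have habsS : ∀ a b, |M a b| ≤ S := by
    intro a b
    calc |M a b| ≤ ∑ b', |M a b'| :=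
        Finset.single_le_sum (f := fun b' => |M a b'|) (fun _ _ => abs_nonneg _)
          (Finset.mem_univ b)
      _ ≤ S := Finset.single_le_sum (f := fun a' => ∑ b', |M a' b'|)
          (fun a' _ => Finset.sum_nonneg fun _ _ => abs_nonneg _) (Finset.mem_univ a)
  have htr : ∑ i, hA.eigenvalues i = ∑ b, ∑ a, M a b * M a b := by
    rw [sum_eigenvalues_eq_trace hA, Matrix.trace]
    refine Finset.sum_congr rfl fun b _ => ?_
    simp only [Matrix.diag_apply, Matrix.mul_apply, Matrix.conjTranspose_apply, star_trivial]
  have hsq : ∑ b, ∑ a, M a b * M a b ≤ S ^ 2 := by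
    calc ∑ b, ∑ a, M a b * M a b ≤ ∑ b, ∑ a, |M a b| * S := by
          refine Finset.sum_le_sum fun b _ => Finset.sum_le_sum fun a _ => ?_
          rw [← abs_mul_abs_self (M a b)]
          exact mul_le_mul_of_nonneg_left (habsS a b) (abs_nonneg _)
      _ = (∑ b, ∑ a, |M a b|) * S := by
          rw [Finset.sum_mul]
          exact Finset.sum_congr rfl fun b _ => (Finset.sum_mul _ _ _).symm
      _ = S * S := by rw [Finset.sum_comm, ← hS]
      _ = S ^ 2 := (sq S).symm
  have hlam : hA.eigenvalues j ≤ S ^ 2 := by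
    refine le_trans (Finset.single_le_sum
      (fun i _ => Matrix.eigenvalues_conjTranspose_mul_self_nonneg M i)
      (Finset.mem_univ j)) ?_
    rw [htr]
    exact hsq
  calc singularValues N M j = Real.sqrt (hA.eigenvalues j) := rfl
    _ ≤ Real.sqrt (S ^ 2) := Real.sqrt_le_sqrt hlam
    _ = S := by rw [Real.sqrt_sq hS0]

set_option maxHeartbeats 1000000 in
lemma schattenNorm_le_of_sv_le (q : ℝ≥0∞) (hq : 1 ≤ q) (hN : 0 < N)
    {M : Matrix (Fin N) (Fin N) ℝ} {c : ℝ} (hc : 0 ≤ c)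
    (h : ∀ j, singularValues N M j ≤ c) : schattenNorm N q M ≤ N * c := by
  have hN1 : (1:ℝ) ≤ N := by exact_mod_cast hN
  have hNc : c ≤ N * c := le_mul_of_one_le_left hc hN1
  rcases eq_or_ne q ⊤ with rfl | hqt
  · rw [schattenNorm, if_pos rfl]
    haveI : Nonempty (Fin N) := ⟨⟨0, hN⟩⟩
    exact ciSup_le fun j => (h j).trans hNc
  · have hr : (1:ℝ) ≤ q.toReal := by
      rw [← ENNReal.toReal_one]
      exact ENNReal.toReal_mono hqt hq
    have hr0 : 0 < q.toReal := lt_of_lt_of_le one_pos hr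
    rw [schattenNorm, if_neg hqt]
    have h1 : ∑ i, singularValues N M i ^ q.toReal ≤ (N:ℝ) * c ^ q.toReal := by
      calc ∑ i, singularValues N M i ^ q.toReal ≤ ∑ _i : Fin N, c ^ q.toReal :=
            Finset.sum_le_sum fun i _ =>
              Real.rpow_le_rpow (sv_nonneg M i) (h i) hr0.le
        _ = (N:ℝ) * c ^ q.toReal := by
            rw [Finset.sum_const, Finset.card_univ, Fintype.card_fin, nsmul_eq_mul]
    calc (∑ i, singularValues N M i ^ q.toReal) ^ (1 / q.toReal)
        ≤ ((N:ℝ) * c ^ q.toReal) ^ (1 / q.toReal) :=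
          Real.rpow_le_rpow (Finset.sum_nonneg fun i _ =>
            Real.rpow_nonneg (sv_nonneg M i) _) h1 (by positivity)
      _ = (N:ℝ) ^ (1 / q.toReal) * c := by
          rw [Real.mul_rpow (by positivity) (by positivity),
            ← Real.rpow_mul hc, mul_one_div_cancel hr0.ne', Real.rpow_one]
      _ ≤ (N:ℝ) * c := by
          refine mul_le_mul_of_nonneg_right ?_ hc
          calc (N:ℝ) ^ (1 / q.toReal) ≤ (N:ℝ) ^ (1:ℝ) :=
                Real.rpow_le_rpow_of_exponent_le hN1
                  (by rw [div_le_one hr0]; exact hr)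
            _ = N := Real.rpow_one _

lemma sSet_bddAbove (p' q : ℝ≥0∞) (hp0 : 0 < p') (hp1 : p' ≤ 1) (hq : 1 ≤ q) (hN : 0 < N)
    (T : Matrix (Fin N) (Fin N) ℝ →ₗ[ℝ] Matrix (Fin N) (Fin N) ℝ) :
    BddAbove {s : ℝ | ∃ A, schattenNorm N p' A ≤ 1 ∧ s = schattenNorm N q (A - T A)} := by
  classical
  obtain ⟨Ct, hCt, hCt0⟩ : ∃ Ct : ℝ,
      Ct = ∑ k, ∑ l, ∑ a, ∑ b, |(T (Matrix.single k l 1)) a b| ∧ 0 ≤ Ct :=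
    ⟨_, rfl, Finset.sum_nonneg fun _ _ => Finset.sum_nonneg fun _ _ =>
      Finset.sum_nonneg fun _ _ => Finset.sum_nonneg fun _ _ => abs_nonneg _⟩
  have hN1 : (1:ℝ) ≤ N := by exact_mod_cast hN
  refine ⟨(N:ℝ) * ((N:ℝ)^2 * ((N:ℝ) + (N:ℝ) * Ct)), ?_⟩
  rintro s ⟨A, hA, rfl⟩
  have hsv1 : ∀ i, singularValues N A i ≤ 1 := (ball_facts p' hp0 hp1 A hA).1
  have hent : ∀ a b, |A a b| ≤ (N:ℝ) := by
    intro a b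
    have h1 : A a b * A a b ≤ (N:ℝ) := by
      have h2 : ∑ b', ∑ a', A a' b' * A a' b' =
          ∑ i, (Matrix.isHermitian_conjTranspose_mul_self A).eigenvalues i := by
        rw [sum_eigenvalues_eq_trace, Matrix.trace]
        refine (Finset.sum_congr rfl fun b' _ => ?_).symm
        simp only [Matrix.diag_apply, Matrix.mul_apply, Matrix.conjTranspose_apply, star_trivial]
      have h3 : ∑ i, (Matrix.isHermitian_conjTranspose_mul_self A).eigenvalues i ≤ (N:ℝ) := by
        calc ∑ i, (Matrix.isHermitian_conjTranspose_mul_self A).eigenvalues i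
            = ∑ i, singularValues N A i ^ 2 := by
              exact (Finset.sum_congr rfl fun i _ => sv_sq A i).symm
          _ ≤ ∑ _i : Fin N, (1:ℝ) := by
              refine Finset.sum_le_sum fun i _ => ?_
              have := hsv1 i
              nlinarith [sv_nonneg A i]
          _ = (N:ℝ) := by simp
      calc A a b * A a b ≤ ∑ a', A a' b * A a' b :=
            Finset.single_le_sum (f := fun a' => A a' b * A a' b)
              (fun a' _ => mul_self_nonneg _) (Finset.mem_univ a)
        _ ≤ ∑ b', ∑ a', A a' b' * A a' b' :=
            Finset.single_le_sum (f := fun b' => ∑ a', A a' b' * A a' b')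
              (fun b' _ => Finset.sum_nonneg fun _ _ => mul_self_nonneg _) (Finset.mem_univ b)
        _ ≤ (N:ℝ) := by rw [h2]; exact h3
    nlinarith [abs_nonneg (A a b), abs_mul_abs_self (A a b)]
  have hTA : T A = ∑ k, ∑ l, A k l • T (Matrix.single k l 1) := by
    conv_lhs => rw [Matrix.matrix_eq_sum_single A]
    rw [map_sum]
    refine Finset.sum_congr rfl fun k _ => ?_
    rw [map_sum]
    refine Finset.sum_congr rfl fun l _ => ?_
    rw [← _root_.map_smul]
    congr 1
    rw [Matrix.smul_single, smul_eq_mul, mul_one]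
  have hentT : ∀ a b, |(T A) a b| ≤ (N:ℝ) * Ct := by
    intro a b
    rw [hTA]
    simp only [Matrix.sum_apply, Matrix.smul_apply, smul_eq_mul]
    refine (Finset.abs_sum_le_sum_abs _ _).trans ?_
    have step : ∀ k, |∑ l, A k l * (T (Matrix.single k l 1)) a b| ≤
        ∑ l, (N:ℝ) * |(T (Matrix.single k l 1)) a b| := by
      intro k
      refine (Finset.abs_sum_le_sum_abs _ _).trans (Finset.sum_le_sum fun l _ => ?_)
      rw [abs_mul]
      exact mul_le_mul_of_nonneg_right (hent k l) (abs_nonneg _)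
    refine (Finset.sum_le_sum fun k _ => step k).trans ?_
    have hms : ∑ k, ∑ l, (N:ℝ) * |(T (Matrix.single k l 1)) a b| =
        (N:ℝ) * ∑ k, ∑ l, |(T (Matrix.single k l 1)) a b| := by
      rw [Finset.mul_sum]
      exact Finset.sum_congr rfl fun k _ => (Finset.mul_sum _ _ _).symm
    rw [hms]
    refine mul_le_mul_of_nonneg_left ?_ (by positivity)
    calc ∑ k, ∑ l, |(T (Matrix.single k l 1)) a b|
        ≤ ∑ k, ∑ l, ∑ a', ∑ b', |(T (Matrix.single k l 1)) a' b'| := by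
          refine Finset.sum_le_sum fun k _ => Finset.sum_le_sum fun l _ => ?_
          calc |(T (Matrix.single k l 1)) a b|
              ≤ ∑ b', |(T (Matrix.single k l 1)) a b'| :=
                Finset.single_le_sum (f := fun b' => |(T (Matrix.single k l 1)) a b'|)
                  (fun _ _ => abs_nonneg _) (Finset.mem_univ b)
            _ ≤ ∑ a', ∑ b', |(T (Matrix.single k l 1)) a' b'| :=
                Finset.single_le_sum (f := fun a' => ∑ b', |(T (Matrix.single k l 1)) a' b'|)
                  (fun _ _ => Finset.sum_nonneg fun _ _ => abs_nonneg _)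
                  (Finset.mem_univ a)
      _ = Ct := hCt.symm
  have hsub : ∀ a b, |(A - T A) a b| ≤ (N:ℝ) + (N:ℝ) * Ct := by
    intro a b
    rw [Matrix.sub_apply]
    refine (abs_sub _ _).trans ?_
    exact add_le_add (hent a b) (hentT a b)
  have hsv : ∀ j, singularValues N (A - T A) j ≤ (N:ℝ)^2 * ((N:ℝ) + (N:ℝ) * Ct) := by
    intro j
    refine (sv_le_sum_abs _ j).trans ?_
    calc ∑ a, ∑ b, |(A - T A) a b| ≤ ∑ _a : Fin N, ∑ _b : Fin N, ((N:ℝ) + (N:ℝ) * Ct) :=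
          Finset.sum_le_sum fun a _ => Finset.sum_le_sum fun b _ => hsub a _
      _ = (N:ℝ)^2 * ((N:ℝ) + (N:ℝ) * Ct) := by
          simp [Finset.sum_const, Finset.card_univ, nsmul_eq_mul]
          ring
  exact schattenNorm_le_of_sv_le q hq hN (by positivity) hsv

lemma zero_mem_sSet (p' q : ℝ≥0∞) (hp0 : 0 < p') (hp1 : p' ≤ 1) (hq : 1 ≤ q)
    (T : Matrix (Fin N) (Fin N) ℝ →ₗ[ℝ] Matrix (Fin N) (Fin N) ℝ) :
    (0:ℝ) ∈ {s : ℝ | ∃ A, schattenNorm N p' A ≤ 1 ∧ s = schattenNorm N q (A - T A)} := by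
  have hp't : p' ≠ ⊤ := by
    intro h; rw [h] at hp1; exact absurd hp1 (by simp)
  have hqor : q = ⊤ ∨ 0 < q.toReal := by
    rcases eq_or_ne q ⊤ with rfl | hqt
    · exact Or.inl rfl
    · refine Or.inr (lt_of_lt_of_le one_pos ?_)
      rw [← ENNReal.toReal_one]
      exact ENNReal.toReal_mono hqt hq
  refine ⟨0, ?_, ?_⟩
  · rw [schattenNorm_zero_matrix p' (Or.inr (ENNReal.toReal_pos hp0.ne' hp't))]
    norm_num
  · rw [map_zero, sub_zero, schattenNorm_zero_matrix q hqor]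

lemma sSup_sSet_eq (p q : ℝ≥0∞) (hp0 : 0 < p) (hp1 : p ≤ 1) (hq : 1 ≤ q) (hN : 0 < N)
    (T : Matrix (Fin N) (Fin N) ℝ →ₗ[ℝ] Matrix (Fin N) (Fin N) ℝ) :
    sSup {s : ℝ | ∃ A, schattenNorm N p A ≤ 1 ∧ s = schattenNorm N q (A - T A)} =
    sSup {s : ℝ | ∃ A, schattenNorm N 1 A ≤ 1 ∧ s = schattenNorm N q (A - T A)} := by
  set Sp := {s : ℝ | ∃ A, schattenNorm N p A ≤ 1 ∧ s = schattenNorm N q (A - T A)} with hSp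
  set S1 := {s : ℝ | ∃ A, schattenNorm N 1 A ≤ 1 ∧ s = schattenNorm N q (A - T A)} with hS1
  have h0p : (0:ℝ) ∈ Sp := zero_mem_sSet p q hp0 hp1 hq T
  have h01 : (0:ℝ) ∈ S1 := zero_mem_sSet 1 q one_pos le_rfl hq T
  have hbp : BddAbove Sp := sSet_bddAbove p q hp0 hp1 hq hN T
  have hb1 : BddAbove S1 := sSet_bddAbove 1 q one_pos le_rfl hq hN T
  apply le_antisymm
  · refine csSup_le_csSup hb1 ⟨0, h0p⟩ ?_
    rintro s ⟨A, hA, rfl⟩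
    exact ⟨A, (ball_facts p hp0 hp1 A hA).2, rfl⟩
  · refine csSup_le ⟨0, h01⟩ ?_
    rintro s ⟨A, hA1, rfl⟩
    refine key_convex p q hp0 hp1 hq T A hA1 (sSup Sp) ?_ ?_
    · exact le_csSup hbp h0p
    · intro B hB
      exact le_csSup hbp ⟨B, hB, rfl⟩

end Assemble

/-- **Stationarity of approximation numbers:** if `0 < p ≤ 1 ≤ q ≤ ∞` and `1 ≤ n ≤ N²`,
then `a_n(S_p^N ↪ S_q^N) = a_n(S_1^N ↪ S_q^N)`. -/
theorem approxNumber_stationary (N : ℕ) (p q : ℝ≥0∞)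
    (hp0 : 0 < p) (hp1 : p ≤ 1) (hq : 1 ≤ q)
    (n : ℕ) (hn1 : 1 ≤ n) (hn2 : n ≤ N ^ 2) :
    approxNumber N p q n = approxNumber N 1 q n := by
  have hN : 0 < N := by
    rcases Nat.eq_zero_or_pos N with h | h
    · subst h
      simp at hn2
      omega
    · exact h
  unfold approxNumber
  congr 1
  ext r
  simp only [Set.mem_setOf_eq]
  constructor
  · rintro ⟨T, hT, rfl⟩
    exact ⟨T, hT, sSup_sSet_eq p q hp0 hp1 hq hN T⟩
  · rintro ⟨T, hT, rfl⟩
    exact ⟨T, hT, (sSup_sSet_eq p q hp0 hp1 hq hN T).symm⟩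
end

section
/- Lower bound for Gelfand numbers via factorization through Hilbert space (quasi-Banach version): let X, Y be m-dimensional quasi-Banach spaces, T : X → Y an invertible linear operator, and suppose T^{-1} = B∘A with A : Y → ℓ₂^m and B : ℓ₂^m → X bounded. Then for all n ≤ m, c_n(T) ≥ (1/(‖A‖‖B‖)) · inf{ d(E, ℓ₂^{m−n+1}) : E ⊂ Y, dim E = m−n+1 }, where d denotes the Banach–Mazur distance. -/
/-- A quasi-norm on a real vector space `X`, with modulus of concavity `C`. -/
structure QuasiNorm (X : Type*) [AddCommGroup X] [Module ℝ X] where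
  toFun : X → ℝ
  C : ℝ
  one_le_C : 1 ≤ C
  nonneg : ∀ x, 0 ≤ toFun x
  eq_zero_iff : ∀ x, toFun x = 0 ↔ x = 0
  smul : ∀ (a : ℝ) (x : X), toFun (a • x) = |a| * toFun x
  triangle : ∀ x y, toFun (x + y) ≤ C * (toFun x + toFun y)

namespace QuasiNorm

variable {X Y : Type*} [AddCommGroup X] [Module ℝ X] [AddCommGroup Y] [Module ℝ Y]

theorem map_zero (q : QuasiNorm X) : q.toFun 0 = 0 := (q.eq_zero_iff 0).mpr rfl

theorem C_pos (q : QuasiNorm X) : 0 < q.C := lt_of_lt_of_le one_pos q.one_le_C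

/-- Pull back a quasi-norm along an injective linear map. -/
noncomputable def comap (q : QuasiNorm Y) (f : X →ₗ[ℝ] Y) (hf : Function.Injective f) :
    QuasiNorm X where
  toFun := fun x => q.toFun (f x)
  C := q.C
  one_le_C := q.one_le_C
  nonneg := fun x => q.nonneg _
  eq_zero_iff := fun x => by
    rw [q.eq_zero_iff]
    exact ⟨fun h => hf (by simpa using h), fun h => by simp [h]⟩
  smul := fun a x => by rw [f.map_smul, q.smul]
  triangle := fun x y => by rw [f.map_add]; exact q.triangle _ _

theorem finset_sum_le (q : QuasiNorm X) {ι : Type*} (s : Finset ι) (g : ι → X) :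
    q.toFun (∑ i ∈ s, g i) ≤ q.C ^ s.card * ∑ i ∈ s, q.toFun (g i) := by
  classical
  induction s using Finset.induction_on with
  | empty => simp [q.map_zero]
  | @insert a s ha ih =>
    rw [Finset.sum_insert ha, Finset.sum_insert ha, Finset.card_insert_of_notMem ha]
    have h1 := q.triangle (g a) (∑ i ∈ s, g i)
    have hC := q.one_le_C
    have hCpow : (1:ℝ) ≤ q.C ^ s.card := one_le_pow₀ hC
    have hga := q.nonneg (g a)
    have hsum : (0:ℝ) ≤ ∑ i ∈ s, q.toFun (g i) :=
      Finset.sum_nonneg fun i _ => q.nonneg _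
    calc q.toFun (g a + ∑ i ∈ s, g i) ≤ q.C * (q.toFun (g a) + q.toFun (∑ i ∈ s, g i)) := h1
      _ ≤ q.C * (q.toFun (g a) + q.C ^ s.card * ∑ i ∈ s, q.toFun (g i)) := by
          have := ih
          nlinarith [q.C_pos]
      _ ≤ q.C ^ (s.card + 1) * (q.toFun (g a) + ∑ i ∈ s, q.toFun (g i)) := by
          rw [pow_succ]
          nlinarith [q.C_pos, mul_nonneg (mul_nonneg q.C_pos.le hga) (sub_nonneg.mpr hCpow)]

end QuasiNorm

open Filter Topology

namespace QuasiNorm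

variable {V : Type*} [AddCommGroup V] [Module ℝ V]

theorem upper_bound (q : QuasiNorm V) {f : ℕ} (b : Module.Basis (Fin f) ℝ V) :
    ∃ K, 0 ≤ K ∧ ∀ v : Fin f → ℝ, q.toFun (b.equivFun.symm v) ≤ K * ‖v‖ := by
  have hKnn : (0:ℝ) ≤ q.C ^ f * ∑ i, q.toFun (b i) := by
    have := q.C_pos
    have : (0:ℝ) ≤ ∑ i, q.toFun (b i) := Finset.sum_nonneg fun i _ => q.nonneg _
    positivity
  refine ⟨q.C ^ f * ∑ i, q.toFun (b i), hKnn, fun v => ?_⟩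
  rw [Module.Basis.equivFun_symm_apply]
  calc q.toFun (∑ i, v i • b i)
      ≤ q.C ^ (Finset.univ : Finset (Fin f)).card * ∑ i, q.toFun (v i • b i) :=
        q.finset_sum_le _ _
    _ = q.C ^ f * ∑ i, |v i| * q.toFun (b i) := by
        simp [q.smul]
    _ ≤ q.C ^ f * ∑ i, ‖v‖ * q.toFun (b i) := by
        have hC : (0:ℝ) < q.C := q.C_pos
        have : ∀ i ∈ (Finset.univ : Finset (Fin f)), |v i| * q.toFun (b i) ≤ ‖v‖ * q.toFun (b i) := by
          intro i _
          have h1 : |v i| ≤ ‖v‖ := by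
            have := norm_le_pi_norm v i
            simpa [Real.norm_eq_abs] using this
          exact mul_le_mul_of_nonneg_right h1 (q.nonneg _)
        have := Finset.sum_le_sum this
        have hCp : (0:ℝ) ≤ q.C ^ f := by positivity
        exact mul_le_mul_of_nonneg_left this hCp
    _ = q.C ^ f * ∑ i, q.toFun (b i) * ‖v‖ := by
        congr 1
        exact Finset.sum_congr rfl fun i _ => mul_comm _ _
    _ = q.C ^ f * ∑ i, q.toFun (b i) * ‖v‖ := rfl
    _ = (q.C ^ f * ∑ i, q.toFun (b i)) * ‖v‖ := by
        rw [← Finset.sum_mul, mul_assoc]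

theorem bounded_on_unit [FiniteDimensional ℝ V] (p q : QuasiNorm V) :
    ∃ M, 0 ≤ M ∧ ∀ x, p.toFun x ≤ 1 → q.toFun x ≤ M := by
  classical
  set f := Module.finrank ℝ V with hf
  let b : Module.Basis (Fin f) ℝ V := Module.finBasis ℝ V
  obtain ⟨Kp, hKp0, hKp⟩ := p.upper_bound b
  obtain ⟨Kq, hKq0, hKq⟩ := q.upper_bound b
  set e : (Fin f → ℝ) ≃ₗ[ℝ] V := b.equivFun.symm with he
  set g : (Fin f → ℝ) → ℝ := fun v => p.toFun (e v) with hg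
  -- positive lower bound on the sphere
  have hδ : ∃ δ > (0:ℝ), ∀ v : Fin f → ℝ, ‖v‖ = 1 → δ ≤ g v := by
    by_contra hcon
    push_neg at hcon
    have hu : ∀ j : ℕ, ∃ v : Fin f → ℝ, ‖v‖ = 1 ∧ g v < 1 / (j + 1) := by
      intro j
      obtain ⟨v, hv1, hv2⟩ := hcon (1 / (j + 1)) (by positivity)
      exact ⟨v, hv1, hv2⟩
    choose u hu1 hu2 using hu
    have hcomp : IsCompact (Metric.sphere (0 : Fin f → ℝ) 1) := isCompact_sphere _ _
    have hmem : ∀ j, u j ∈ Metric.sphere (0 : Fin f → ℝ) 1 := fun j =>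
      mem_sphere_zero_iff_norm.mpr (hu1 j)
    obtain ⟨x, hx, σ, hσ, hconv⟩ := hcomp.tendsto_subseq hmem
    have hxnorm : ‖x‖ = 1 := mem_sphere_zero_iff_norm.mp hx
    have hineq : ∀ j, g x ≤ p.C * g (u (σ j)) + p.C * Kp * ‖x - u (σ j)‖ := by
      intro j
      have hx' : x = u (σ j) + (x - u (σ j)) := by abel
      have h1 : g x ≤ p.C * (g (u (σ j)) + p.toFun (e (x - u (σ j)))) := by
        calc g x = p.toFun (e (u (σ j) + (x - u (σ j)))) := by rw [← hx']
          _ = p.toFun (e (u (σ j)) + e (x - u (σ j))) := by rw [map_add]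
          _ ≤ p.C * (g (u (σ j)) + p.toFun (e (x - u (σ j)))) := p.triangle _ _
      have h2 : p.toFun (e (x - u (σ j))) ≤ Kp * ‖x - u (σ j)‖ := hKp _
      nlinarith [p.C_pos]
    have h1 : Tendsto (fun j => g (u (σ j))) atTop (𝓝 0) := by
      apply squeeze_zero (fun j => p.nonneg _) (g := fun j : ℕ => 1 / (j + 1))
      · intro j
        have := (hu2 (σ j)).le
        have hb : (1:ℝ) / (σ j + 1) ≤ 1 / (j + 1) := by
          apply one_div_le_one_div_of_le (by positivity)
          have : (j:ℝ) ≤ σ j := Nat.cast_le.mpr (hσ.le_apply)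
          linarith
        linarith
      · exact tendsto_one_div_add_atTop_nhds_zero_nat
    have h2 : Tendsto (fun j => ‖x - u (σ j)‖) atTop (𝓝 0) := by
      have := tendsto_iff_norm_sub_tendsto_zero.mp hconv
      simpa [norm_sub_rev] using this
    have h3 : Tendsto (fun j => p.C * g (u (σ j)) + p.C * Kp * ‖x - u (σ j)‖) atTop
        (𝓝 (p.C * 0 + p.C * Kp * 0)) := (h1.const_mul _).add (h2.const_mul _)
    rw [mul_zero, mul_zero, add_zero] at h3
    have hgx : g x ≤ 0 := ge_of_tendsto' h3 hineq
    have hgx0 : g x = 0 := le_antisymm hgx (p.nonneg _)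
    have hex : e x = 0 := (p.eq_zero_iff _).mp hgx0
    have hx0 : x = 0 := by
      have := e.injective (by simpa using hex)
      simpa using this
    rw [hx0] at hxnorm
    simp at hxnorm
  obtain ⟨δ, hδpos, hδle⟩ := hδ
  refine ⟨Kq * δ⁻¹, by positivity, fun x hx => ?_⟩
  set v : Fin f → ℝ := b.equivFun x with hv
  have hev : e v = x := b.equivFun.symm_apply_apply x
  by_cases hv0 : v = 0
  · have hx0 : x = 0 := by rw [← hev, hv0]; exact LinearEquiv.map_zero e
    rw [hx0, q.map_zero]
    positivity
  · have hvn : (0:ℝ) < ‖v‖ := norm_pos_iff.mpr hv0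
    have hw : ‖(‖v‖⁻¹ • v : Fin f → ℝ)‖ = 1 := by
      rw [norm_smul, norm_inv, norm_norm, inv_mul_cancel₀ hvn.ne']
    have hgw : g (‖v‖⁻¹ • v) = ‖v‖⁻¹ * p.toFun x := by
      rw [hg]
      simp only [map_smul]
      rw [p.smul, hev, abs_of_nonneg (by positivity)]
    have hδw := hδle _ hw
    rw [hgw] at hδw
    have hvb : ‖v‖ ≤ δ⁻¹ := by
      have h1 : δ * ‖v‖ ≤ p.toFun x := by
        calc δ * ‖v‖ ≤ (‖v‖⁻¹ * p.toFun x) * ‖v‖ :=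
            mul_le_mul_of_nonneg_right hδw hvn.le
          _ = p.toFun x := by field_simp
      have h2 : δ * ‖v‖ ≤ 1 := h1.trans hx
      calc ‖v‖ = δ⁻¹ * (δ * ‖v‖) := by field_simp
        _ ≤ δ⁻¹ * 1 := mul_le_mul_of_nonneg_left h2 (by positivity)
        _ = δ⁻¹ := mul_one _
    calc q.toFun x = q.toFun (e v) := by rw [hev]
      _ ≤ Kq * ‖v‖ := hKq _
      _ ≤ Kq * δ⁻¹ := mul_le_mul_of_nonneg_left hvb hKq0

end QuasiNorm

/-- Operator "norm" of a map between spaces with given (quasi-)norm functions. -/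
noncomputable def opN {X Y : Type*} (nX : X → ℝ) (nY : Y → ℝ) (T : X → Y) : ℝ :=
  sSup {r : ℝ | ∃ x, nX x ≤ 1 ∧ r = nY (T x)}

/-- The `n`-th Gelfand number of a linear map between quasi-normed spaces. -/
noncomputable def gelfandN {X Y : Type*} [AddCommGroup X] [Module ℝ X]
    [AddCommGroup Y] [Module ℝ Y]
    (nX : X → ℝ) (nY : Y → ℝ) (T : X →ₗ[ℝ] Y) (n : ℕ) : ℝ :=
  sInf {r : ℝ | ∃ F : Submodule ℝ X,
    Module.finrank ℝ X - Module.finrank ℝ F < n ∧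
    r = sSup {s : ℝ | ∃ x ∈ F, nX x ≤ 1 ∧ s = nY (T x)}}

/-- The Banach–Mazur distance of a quasi-normed space `Z` to `ℓ₂^k`. -/
noncomputable def distToEuclidean {Z : Type*} [AddCommGroup Z] [Module ℝ Z]
    (nZ : Z → ℝ) (k : ℕ) : ℝ :=
  sInf {r : ℝ | ∃ φ : Z ≃ₗ[ℝ] EuclideanSpace ℝ (Fin k),
    r = opN nZ (fun v => ‖v‖) φ * opN (fun v : EuclideanSpace ℝ (Fin k) => ‖v‖) nZ φ.symm}

theorem opN_nonneg {X Y : Type*} (nX : X → ℝ) (nY : Y → ℝ) (h : ∀ y, 0 ≤ nY y)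
    (T : X → Y) : 0 ≤ opN nX nY T :=
  Real.sSup_nonneg (by rintro r ⟨x, -, rfl⟩; exact h _)

theorem distToEuclidean_nonneg {Z : Type*} [AddCommGroup Z] [Module ℝ Z]
    (nZ : Z → ℝ) (h : ∀ z, 0 ≤ nZ z) (k : ℕ) : 0 ≤ distToEuclidean nZ k := by
  apply Real.sInf_nonneg
  rintro r ⟨φ, rfl⟩
  exact mul_nonneg (opN_nonneg _ _ (fun v => norm_nonneg v) _) (opN_nonneg _ _ h _)

/-- **Lower bound for Gelfand numbers via factorization through Hilbert space
(quasi-Banach version).** Let `X, Y` be `m`-dimensional quasi-Banach spaces,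
`T : X → Y` an invertible linear operator with `T⁻¹ = B ∘ A` for linear maps
`A : Y → ℓ₂^m`, `B : ℓ₂^m → X`. Then for all `n ≤ m`,
`c_n(T) ≥ (1/(‖A‖‖B‖)) · inf { d(E, ℓ₂^{m-n+1}) : E ⊂ Y, dim E = m-n+1 }`. -/
theorem gelfand_lower_factorization
    {X Y : Type*} [AddCommGroup X] [Module ℝ X] [AddCommGroup Y] [Module ℝ Y]
    (nX : QuasiNorm X) (nY : QuasiNorm Y)
    (m : ℕ) (hm : 0 < m)
    (hdimX : Module.finrank ℝ X = m) (hdimY : Module.finrank ℝ Y = m)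
    (T : X ≃ₗ[ℝ] Y)
    (A : Y →ₗ[ℝ] EuclideanSpace ℝ (Fin m)) (B : EuclideanSpace ℝ (Fin m) →ₗ[ℝ] X)
    (hfact : (T.symm : Y →ₗ[ℝ] X) = B ∘ₗ A)
    (n : ℕ) (hn1 : 1 ≤ n) (hnm : n ≤ m) :
    (1 / (opN nY.toFun (fun v => ‖v‖) A *
          opN (fun v : EuclideanSpace ℝ (Fin m) => ‖v‖) nX.toFun B)) *
      sInf {d : ℝ | ∃ E : Submodule ℝ Y, Module.finrank ℝ E = m - n + 1 ∧
        d = distToEuclidean (fun x : E => nY.toFun (x : Y)) (m - n + 1)}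
      ≤ gelfandN nX.toFun nY.toFun (T : X →ₗ[ℝ] Y) n := by
  classical
  have hFDX : FiniteDimensional ℝ X := FiniteDimensional.of_finrank_pos (by omega : 0 < Module.finrank ℝ X)
  have hFDY : FiniteDimensional ℝ Y := FiniteDimensional.of_finrank_pos (by omega : 0 < Module.finrank ℝ Y)
  set k := m - n + 1 with hk
  set a := opN nY.toFun (fun v : EuclideanSpace ℝ (Fin m) => ‖v‖) A with ha
  set bb := opN (fun v : EuclideanSpace ℝ (Fin m) => ‖v‖) nX.toFun B with hbb
  set S := {d : ℝ | ∃ E : Submodule ℝ Y, Module.finrank ℝ E = k ∧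
        d = distToEuclidean (fun x : E => nY.toFun (x : Y)) k} with hS
  have ha0 : 0 ≤ a := opN_nonneg _ _ (fun v => norm_nonneg v) _
  have hb0 : 0 ≤ bb := opN_nonneg _ _ nX.nonneg _
  have hSlb : ∀ d ∈ S, (0:ℝ) ≤ d := by
    rintro d ⟨E, -, rfl⟩
    exact distToEuclidean_nonneg _ (fun z => nY.nonneg _) _
  have hSbdd : BddBelow S := ⟨0, hSlb⟩
  have hGlb : ∀ r ∈ {r : ℝ | ∃ F : Submodule ℝ X,
      Module.finrank ℝ X - Module.finrank ℝ F < n ∧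
      r = sSup {s : ℝ | ∃ x ∈ F, nX.toFun x ≤ 1 ∧ s = nY.toFun (T x)}}, (0:ℝ) ≤ r := by
    rintro r ⟨F, -, rfl⟩
    exact Real.sSup_nonneg (by rintro s ⟨x, -, -, rfl⟩; exact nY.nonneg _)
  have hgel0 : 0 ≤ gelfandN nX.toFun nY.toFun (T : X →ₗ[ℝ] Y) n :=
    Real.sInf_nonneg hGlb
  by_cases hab : a * bb = 0
  · rw [hab]
    simpa using hgel0
  · have habpos : 0 < a * bb := lt_of_le_of_ne (mul_nonneg ha0 hb0) (Ne.symm hab)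
    have haBdd : BddAbove {r : ℝ | ∃ y, nY.toFun y ≤ 1 ∧ r = ‖A y‖} := by
      by_contra h
      exact hab (by rw [ha, opN, Real.sSup_of_not_bddAbove h, zero_mul])
    have hbBdd : BddAbove {r : ℝ | ∃ v : EuclideanSpace ℝ (Fin m), ‖v‖ ≤ 1 ∧ r = nX.toFun (B v)} := by
      by_contra h
      exact hab (by rw [hbb, opN, Real.sSup_of_not_bddAbove h, mul_zero])
    apply le_csInf
    · refine ⟨_, ⊤, ?_, rfl⟩
      rw [finrank_top ℝ X]
      omega
    rintro r ⟨F, hF, rfl⟩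
    set cSet := {s : ℝ | ∃ x ∈ F, nX.toFun x ≤ 1 ∧ s = nY.toFun (T x)} with hcSet
    set c := sSup cSet with hc
    have hc0 : (0:ℝ) ≤ c :=
      Real.sSup_nonneg (by rintro s ⟨x, -, -, rfl⟩; exact nY.nonneg _)
    -- boundedness of cSet via the finite-dimensional quasi-norm comparison
    have hcBdd : BddAbove cSet := by
      obtain ⟨M, hM0, hM⟩ := QuasiNorm.bounded_on_unit
        (nX.comap F.subtype F.injective_subtype)
        (nY.comap ((T : X →ₗ[ℝ] Y).comp F.subtype)
          (by
            rw [LinearMap.coe_comp]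
            exact T.injective.comp F.injective_subtype))
      refine ⟨M, ?_⟩
      rintro s ⟨x, hxF, hx1, rfl⟩
      exact hM ⟨x, hxF⟩ hx1
    -- pick a k-dimensional subspace F₀ of F
    rw [hdimX] at hF
    have hFle : Module.finrank ℝ F ≤ m := hdimX ▸ F.finrank_le
    have hkF : k ≤ Module.finrank ℝ F := by omega
    set bF : Module.Basis (Fin (Module.finrank ℝ F)) ℝ F := Module.finBasis ℝ F with hbF
    set w : Fin k → X := fun i => (bF (Fin.castLE hkF i) : X) with hw
    have hwli : LinearIndependent ℝ w := by
      have h1 : LinearIndependent ℝ (fun i : Fin k => bF (Fin.castLE hkF i)) :=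
        bF.linearIndependent.comp _ (Fin.castLE_injective hkF)
      exact h1.map' F.subtype F.ker_subtype
    set F₀ : Submodule ℝ X := Submodule.span ℝ (Set.range w) with hF₀
    have hF₀le : F₀ ≤ F := Submodule.span_le.mpr (by rintro _ ⟨i, rfl⟩; exact (bF _).2)
    have hF₀rank : Module.finrank ℝ F₀ = k := by
      rw [hF₀, finrank_span_eq_card hwli, Fintype.card_fin]
    set E : Submodule ℝ Y := F₀.map (T : X →ₗ[ℝ] Y) with hE
    have hErank : Module.finrank ℝ E = k := by
      rw [hE, LinearEquiv.finrank_map_eq T F₀]; exact hF₀rank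
    -- A is injective
    have hAinj : Function.Injective A := by
      intro y1 y2 hA12
      have h1 : (T.symm : Y →ₗ[ℝ] X) y1 = (T.symm : Y →ₗ[ℝ] X) y2 := by
        rw [hfact]; simp only [LinearMap.comp_apply, hA12]
      exact T.symm.injective h1
    set ψ : E →ₗ[ℝ] EuclideanSpace ℝ (Fin m) := A.comp E.subtype with hψ
    have hψinj : Function.Injective ψ := by
      rw [hψ, LinearMap.coe_comp]
      exact hAinj.comp E.injective_subtype
    set W := LinearMap.range ψ with hW
    set eqv1 : E ≃ₗ[ℝ] W := LinearEquiv.ofInjective ψ hψinj with heqv1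
    have hWrank : Module.finrank ℝ W = k := by
      rw [← hErank]; exact (LinearEquiv.finrank_eq eqv1).symm
    set obW : OrthonormalBasis (Fin k) ℝ W := (stdOrthonormalBasis ℝ W).reindex (finCongr hWrank) with hobW
    set eqv2 : W ≃ₗᵢ[ℝ] EuclideanSpace ℝ (Fin k) := obW.repr with heqv2
    set φ : E ≃ₗ[ℝ] EuclideanSpace ℝ (Fin k) := eqv1.trans eqv2.toLinearEquiv with hφ
    have hφnorm : ∀ x : E, ‖φ x‖ = ‖A (x : Y)‖ := by
      intro x
      have h2 : ((eqv1 x : W) : EuclideanSpace ℝ (Fin m)) = A (x : Y) := by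
        rw [heqv1]
        rw [LinearEquiv.ofInjective_apply]
        rfl
      calc ‖φ x‖ = ‖eqv2 (eqv1 x)‖ := rfl
        _ = ‖eqv1 x‖ := eqv2.norm_map _
        _ = ‖((eqv1 x : W) : EuclideanSpace ℝ (Fin m))‖ := rfl
        _ = ‖A (x : Y)‖ := by rw [h2]
    -- bound the two operator norms of φ
    have hbound1 : opN (fun x : E => nY.toFun (x : Y)) (fun v => ‖v‖) φ ≤ a := by
      apply Real.sSup_le _ ha0
      rintro r ⟨x, hx1, rfl⟩
      show ‖φ x‖ ≤ a
      rw [hφnorm]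
      exact le_csSup haBdd ⟨(x : Y), hx1, rfl⟩
    have hbound2 : opN (fun v : EuclideanSpace ℝ (Fin k) => ‖v‖)
        (fun x : E => nY.toFun (x : Y)) φ.symm ≤ bb * c := by
      apply Real.sSup_le _ (mul_nonneg hb0 hc0)
      rintro r ⟨v, hv1, rfl⟩
      set x : E := φ.symm v with hx
      have hAx : ‖A (x : Y)‖ ≤ 1 := by
        rw [← hφnorm x, hx, φ.apply_symm_apply]
        exact hv1
      obtain ⟨x₀, hx₀F₀, hTx₀⟩ := x.2
      have hTsymm : (T.symm : Y →ₗ[ℝ] X) (x : Y) = x₀ := by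
        rw [← hTx₀]
        exact T.symm_apply_apply x₀
      have hBA : B (A (x : Y)) = x₀ := by
        rw [← hTsymm, hfact, LinearMap.comp_apply]
      have hx₀b : nX.toFun x₀ ≤ bb := by
        rw [← hBA]
        exact le_csSup hbBdd ⟨A (x : Y), hAx, rfl⟩
      have hgoal : nY.toFun ((x : E) : Y) ≤ bb * c := by
        rcases eq_or_lt_of_le (nX.nonneg x₀) with ht0 | htpos
        · have hx₀0 : x₀ = 0 := (nX.eq_zero_iff x₀).mp ht0.symm
          have : ((x : E) : Y) = 0 := by
            rw [← hTx₀, hx₀0, map_zero]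
          rw [this, nY.map_zero]
          exact mul_nonneg hb0 hc0
        · set t := nX.toFun x₀ with htdef
          have hmem : nY.toFun (T (t⁻¹ • x₀)) ∈ cSet := by
            refine ⟨t⁻¹ • x₀, F.smul_mem _ (hF₀le hx₀F₀), ?_, rfl⟩
            rw [nX.smul, abs_of_nonneg (by positivity), ← htdef, inv_mul_cancel₀ htpos.ne']
          have h1 : nY.toFun (T (t⁻¹ • x₀)) ≤ c := le_csSup hcBdd hmem
          have h2 : nY.toFun (T (t⁻¹ • x₀)) = t⁻¹ * nY.toFun (T x₀) := by
            rw [map_smul, nY.smul, abs_of_nonneg (by positivity)]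
          have h3 : nY.toFun (T x₀) ≤ t * c := by
            have := h1
            rw [h2] at this
            calc nY.toFun (T x₀) = t * (t⁻¹ * nY.toFun (T x₀)) := by field_simp
              _ ≤ t * c := mul_le_mul_of_nonneg_left this htpos.le
          calc nY.toFun ((x : E) : Y) = nY.toFun (T x₀) := by rw [← hTx₀]; rfl
            _ ≤ t * c := h3
            _ ≤ bb * c := mul_le_mul_of_nonneg_right hx₀b hc0
      exact hgoal
    -- distance bound
    have hd : distToEuclidean (fun x : E => nY.toFun (x : Y)) k ≤ a * (bb * c) := by
      have hmem : opN (fun x : E => nY.toFun (x : Y)) (fun v => ‖v‖) φ *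
          opN (fun v : EuclideanSpace ℝ (Fin k) => ‖v‖) (fun x : E => nY.toFun (x : Y)) φ.symm ∈
          {r : ℝ | ∃ φ' : E ≃ₗ[ℝ] EuclideanSpace ℝ (Fin k),
            r = opN (fun x : E => nY.toFun (x : Y)) (fun v => ‖v‖) φ' *
              opN (fun v : EuclideanSpace ℝ (Fin k) => ‖v‖) (fun x : E => nY.toFun (x : Y)) φ'.symm} :=
        ⟨φ, rfl⟩
      have hbdd : BddBelow {r : ℝ | ∃ φ' : E ≃ₗ[ℝ] EuclideanSpace ℝ (Fin k),
            r = opN (fun x : E => nY.toFun (x : Y)) (fun v => ‖v‖) φ' *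
              opN (fun v : EuclideanSpace ℝ (Fin k) => ‖v‖) (fun x : E => nY.toFun (x : Y)) φ'.symm} := by
        refine ⟨0, ?_⟩
        rintro r ⟨φ', rfl⟩
        exact mul_nonneg (opN_nonneg _ _ (fun v => norm_nonneg v) _)
          (opN_nonneg _ _ (fun z => nY.nonneg _) _)
      calc distToEuclidean (fun x : E => nY.toFun (x : Y)) k ≤ _ := csInf_le hbdd hmem
        _ ≤ a * (bb * c) :=
          mul_le_mul hbound1 hbound2 (opN_nonneg _ _ (fun z => nY.nonneg _) _) ha0
    have hSle : sInf S ≤ a * (bb * c) :=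
      le_trans (csInf_le hSbdd ⟨E, hErank, rfl⟩) hd
    rw [div_mul_eq_mul_div, one_mul, div_le_iff₀ habpos]
    calc sInf S ≤ a * (bb * c) := hSle
      _ = c * (a * bb) := by ring
end
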